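/- arXiv:2605.31388 — 3 statements merged into one kernel-verified Lean document; each statement's English description precedes it below -/
import Mathlib

section
/- Hessian of the soft fixed point (Proposition 3.5): in the finite soft MOMDP setup with S = {s_1,…,s_p}, the map θ ↦ V(θ)(s) is twice differentiable on ℝ^n for each state s, and the n×n Hessian matrix of θ ↦ V(θ)(s_k) is H[V(θ)(s_k)] = (1/β) Σ_{l=1}^p [(I_p − γ T^{π_θ})^{-1}]_{kl} · B^{π_θ}(s_l), where π_θ is the softmax policy π_θ(a|s) = exp(Q_θ(s,a)/β)/Σ_{a'} exp(Q_θ(s,a')/β) with Q_θ(s,a) = ⟨θ, r(s,a)⟩ + γ Σ_{s'} T(s'|s,a)V(θ)(s'), T^{π_θ} is the p×p matrix with [T^{π_θ}]_{ij} = Σ_a π_θ(a|s_i) T(s_j|s_i,a), and B^{π_θ}(s) = Σ_a π_θ(a|s)·(Q^{π_θ}(s,a) − Q̄^{π_θ}(s))(Q^{π_θ}(s,a) − Q̄^{π_θ}(s))^⊤ is the covariance matrix of the vector action-values Q^{π_θ}(s,a) = r(s,a) + γ Σ_{s'} T(s'|s,a) w^{π_θ}(s') under π_θ(·|s), with Q̄^{π_θ}(s)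 = Σ_a π_θ(a|s)Q^{π_θ}(s,a) and w^{π_θ} the unique solution of w(s) = Σ_a π_θ(a|s)(r(s,a) + γ Σ_{s'} T(s'|s,a) w(s')). -/
open Finset

/-- max argument : a nonneg row-stochastic linear contraction has only the zero fixed point. -/
private lemma stmt7_contract {p : ℕ} {γ : ℝ} (hγ0 : 0 ≤ γ) (hγ1 : γ < 1)
    (P : Fin p → Fin p → ℝ) (hP0 : ∀ s s', 0 ≤ P s s') (hP1 : ∀ s, ∑ s', P s s' = 1)
    (x : Fin p → ℝ) (hx : ∀ s, x s = γ * ∑ s', P s s' * x s') : x = 0 := by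
  rcases Nat.eq_zero_or_pos p with hp | hp
  · subst hp; funext s; exact absurd s.2 (by omega)
  have : Nonempty (Fin p) := ⟨⟨0, hp⟩⟩
  obtain ⟨k, -, hk⟩ := Finset.exists_max_image Finset.univ (fun l => |x l|) ⟨⟨0, hp⟩, mem_univ _⟩
  have hbound : |x k| ≤ γ * |x k| := by
    calc |x k| = γ * |∑ s', P k s' * x s'| := by rw [hx k, abs_mul, abs_of_nonneg hγ0]
    _ ≤ γ * ∑ s', P k s' * |x k| := by
        refine mul_le_mul_of_nonneg_left ((Finset.abs_sum_le_sum_abs _ _).trans ?_) hγ0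
        refine Finset.sum_le_sum fun s' _ => ?_
        rw [abs_mul, abs_of_nonneg (hP0 k s')]
        exact mul_le_mul_of_nonneg_left (hk s' (mem_univ _)) (hP0 k s')
    _ = γ * |x k| := by rw [← Finset.sum_mul, hP1 k, one_mul]
  have hk0 : |x k| = 0 := by nlinarith [abs_nonneg (x k)]
  funext l
  have := (hk l (mem_univ _)).trans hk0.le
  simpa using le_antisymm this (abs_nonneg _)

/-- logsumexp comparison. -/
private lemma stmt7_lse_le {A : Type*} [Fintype A] [Nonempty A] {β : ℝ} (hβ : 0 < β)
    (x y : A → ℝ) {c : ℝ} (h : ∀ a, x a ≤ y a + c) :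
    β * Real.log (∑ a, Real.exp (x a / β)) ≤ β * Real.log (∑ a, Real.exp (y a / β)) + c := by
  have hypos : (0:ℝ) < ∑ a, Real.exp (y a / β) :=
    Finset.sum_pos (fun a _ => Real.exp_pos _) Finset.univ_nonempty
  have hxpos : (0:ℝ) < ∑ a, Real.exp (x a / β) :=
    Finset.sum_pos (fun a _ => Real.exp_pos _) Finset.univ_nonempty
  have hxle : ∑ a, Real.exp (x a / β) ≤ Real.exp (c / β) * ∑ a, Real.exp (y a / β) := by
    rw [Finset.mul_sum]
    refine Finset.sum_le_sum fun a _ => ?_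
    rw [← Real.exp_add]
    apply Real.exp_le_exp.2
    rw [← add_div]
    gcongr
    linarith [h a]
  have hlog : Real.log (∑ a, Real.exp (x a / β)) ≤
      c / β + Real.log (∑ a, Real.exp (y a / β)) := by
    calc Real.log (∑ a, Real.exp (x a / β))
        ≤ Real.log (Real.exp (c / β) * ∑ a, Real.exp (y a / β)) := Real.log_le_log hxpos hxle
      _ = c / β + Real.log (∑ a, Real.exp (y a / β)) := by
          rw [Real.log_mul (Real.exp_ne_zero _) (ne_of_gt hypos), Real.log_exp]
  have := mul_le_mul_of_nonneg_left hlog hβ.le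
  calc β * Real.log (∑ a, Real.exp (x a / β))
      ≤ β * (c / β + Real.log (∑ a, Real.exp (y a / β))) := this
    _ = β * Real.log (∑ a, Real.exp (y a / β)) + c := by field_simp; ring

/-- one-step comparison for the soft Bellman operator. -/
private lemma stmt7_comp {p : ℕ} {A : Type*} [Fintype A] [Nonempty A]
    {γ β : ℝ} (hγ0 : 0 ≤ γ) (hβ : 0 < β)
    (T : Fin p → A → Fin p → ℝ) (hT0 : ∀ s a s', 0 ≤ T s a s') (hT1 : ∀ s a, ∑ s', T s a s' = 1)
    (q : Fin p → A → ℝ) (v w : Fin p → ℝ) {c : ℝ} (h : ∀ s', |v s' - w s'| ≤ c) (s : Fin p) :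
    |β * Real.log (∑ a, Real.exp ((q s a + γ * ∑ s', T s a s' * v s') / β))
      - β * Real.log (∑ a, Real.exp ((q s a + γ * ∑ s', T s a s' * w s') / β))| ≤ γ * c := by
  have key : ∀ v w : Fin p → ℝ, (∀ s', |v s' - w s'| ≤ c) →
      β * Real.log (∑ a, Real.exp ((q s a + γ * ∑ s', T s a s' * v s') / β))
      ≤ β * Real.log (∑ a, Real.exp ((q s a + γ * ∑ s', T s a s' * w s') / β)) + γ * c := by
    intro v w h
    refine stmt7_lse_le hβ _ _ fun a => ?_
    have hsum : ∑ s', T s a s' * v s' ≤ ∑ s', T s a s' * w s' + c := by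
      have : ∑ s', T s a s' * v s' - ∑ s', T s a s' * w s' ≤ c := by
        rw [← Finset.sum_sub_distrib]
        calc ∑ s', (T s a s' * v s' - T s a s' * w s')
            ≤ ∑ s', T s a s' * c := by
              refine Finset.sum_le_sum fun s' _ => ?_
              rw [← mul_sub]
              calc T s a s' * (v s' - w s') ≤ T s a s' * |v s' - w s'| :=
                    mul_le_mul_of_nonneg_left (le_abs_self _) (hT0 s a s')
                _ ≤ T s a s' * c := mul_le_mul_of_nonneg_left (h s') (hT0 s a s')
          _ = c := by rw [← Finset.sum_mul, hT1 s a, one_mul]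
      linarith
    have := mul_le_mul_of_nonneg_left hsum hγ0
    nlinarith
  have h' : ∀ s', |w s' - v s'| ≤ c := fun s' => by rw [abs_sub_comm]; exact h s'
  rw [abs_sub_le_iff]
  constructor <;> [skip; skip] <;> linarith [key v w h, key w v h']

/-- uniqueness of the soft Bellman fixed point. -/
private lemma stmt7_fixed_unique {p : ℕ} {A : Type*} [Fintype A] [Nonempty A]
    {γ β : ℝ} (hγ0 : 0 ≤ γ) (hγ1 : γ < 1) (hβ : 0 < β)
    (T : Fin p → A → Fin p → ℝ) (hT0 : ∀ s a s', 0 ≤ T s a s') (hT1 : ∀ s a, ∑ s', T s a s' = 1)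
    (q : Fin p → A → ℝ) (v w : Fin p → ℝ)
    (hv : ∀ s, v s = β * Real.log (∑ a, Real.exp ((q s a + γ * ∑ s', T s a s' * v s') / β)))
    (hw : ∀ s, w s = β * Real.log (∑ a, Real.exp ((q s a + γ * ∑ s', T s a s' * w s') / β))) :
    v = w := by
  rcases Nat.eq_zero_or_pos p with hp | hp
  · funext s; exact absurd s.2 (by omega)
  obtain ⟨k, -, hk⟩ := Finset.exists_max_image Finset.univ (fun l => |v l - w l|)
    ⟨⟨0, hp⟩, Finset.mem_univ _⟩
  have hks : ∀ s, |v s - w s| ≤ γ * |v k - w k| := by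
    intro s
    rw [hv s, hw s]
    exact stmt7_comp hγ0 hβ T hT0 hT1 q v w (fun s' => hk s' (Finset.mem_univ _)) s
  have h0 : |v k - w k| = 0 := by nlinarith [hks k, abs_nonneg (v k - w k)]
  funext s
  have := (hks s).trans (by rw [h0, mul_zero])
  have h2 : v s - w s = 0 := abs_eq_zero.1 (le_antisymm this (abs_nonneg _))
  linarith

/-- expansion of the policy-evaluation operator. -/
private lemma stmt7_expand {p : ℕ} {A : Type*} [Fintype A] (γ : ℝ)
    (T : Fin p → A → Fin p → ℝ) (π : Fin p → A → ℝ) (c : Fin p → A → ℝ)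
    (w : Fin p → ℝ) (s : Fin p) :
    ∑ a, π s a * (c s a + γ * ∑ s', T s a s' * w s')
      = (∑ a, π s a * c s a) + γ * ∑ s', (∑ a, π s a * T s a s') * w s' := by
  simp only [mul_add, Finset.mul_sum, Finset.sum_mul, Finset.sum_add_distrib]
  congr 1
  rw [Finset.sum_comm]
  exact Finset.sum_congr rfl fun a _ => Finset.sum_congr rfl fun s' _ => by ring

/-- uniqueness of solutions of the linear policy-evaluation equation. -/
private lemma stmt7_lineq {p : ℕ} {A : Type*} [Fintype A]
    {γ : ℝ} (hγ0 : 0 ≤ γ) (hγ1 : γ < 1)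
    (T : Fin p → A → Fin p → ℝ) (hT0 : ∀ s a s', 0 ≤ T s a s') (hT1 : ∀ s a, ∑ s', T s a s' = 1)
    (π : Fin p → A → ℝ) (hπ0 : ∀ s a, 0 ≤ π s a) (hπ1 : ∀ s, ∑ a, π s a = 1)
    (c : Fin p → A → ℝ) (u v : Fin p → ℝ)
    (hu : ∀ s, u s = ∑ a, π s a * (c s a + γ * ∑ s', T s a s' * u s'))
    (hv : ∀ s, v s = ∑ a, π s a * (c s a + γ * ∑ s', T s a s' * v s')) :
    u = v := by
  have key : u - v = 0 := by
    refine stmt7_contract hγ0 hγ1 (fun s s' => ∑ a, π s a * T s a s')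
      (fun s s' => Finset.sum_nonneg fun a _ => mul_nonneg (hπ0 s a) (hT0 s a s'))
      (fun s => by
        rw [Finset.sum_comm]
        calc ∑ a, ∑ s', π s a * T s a s' = ∑ a, π s a * ∑ s', T s a s' := by
              simp [Finset.mul_sum]
          _ = 1 := by simp only [hT1]; simpa using hπ1 s)
      (u - v) (fun s => ?_)
    have h1 : u s - v s = γ * ((∑ s', (∑ a, π s a * T s a s') * u s')
        - ∑ s', (∑ a, π s a * T s a s') * v s') := by
      rw [hu s, hv s, stmt7_expand, stmt7_expand]; ring
    rw [Pi.sub_apply, h1, ← Finset.sum_sub_distrib]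
    congr 1
    refine Finset.sum_congr rfl fun s' _ => ?_
    rw [Pi.sub_apply, mul_sub]
  funext s
  have := congrFun key s
  simp only [Pi.sub_apply, Pi.zero_apply, sub_eq_zero] at this
  exact this


private lemma stmt7_smooth {p n : ℕ} {A : Type*} [Fintype A] [Nonempty A]
    (T : Fin p → A → Fin p → ℝ)
    (hT0 : ∀ s a s', 0 ≤ T s a s') (hT1 : ∀ s a, ∑ s', T s a s' = 1)
    {γ : ℝ} (hγ0 : 0 ≤ γ) (hγ1 : γ < 1) {β : ℝ} (hβ : 0 < β)
    (r : Fin p → A → Fin n → ℝ)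
    (V : (Fin n → ℝ) → Fin p → ℝ)
    (hV : ∀ θ s, V θ s = β * Real.log (∑ a : A, Real.exp
      ((∑ i, θ i * r s a i + γ * ∑ s', T s a s' * V θ s') / β)))
    (huniq : ∀ (q : Fin p → A → ℝ) (v w : Fin p → ℝ),
      (∀ s, v s = β * Real.log (∑ a, Real.exp ((q s a + γ * ∑ s', T s a s' * v s') / β))) →
      (∀ s, w s = β * Real.log (∑ a, Real.exp ((q s a + γ * ∑ s', T s a s' * w s') / β))) →
      v = w)
    (hcomp : ∀ (q : Fin p → A → ℝ) (v w : Fin p → ℝ) (c : ℝ), (∀ s', |v s' - w s'| ≤ c) →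
      ∀ s, |β * Real.log (∑ a, Real.exp ((q s a + γ * ∑ s', T s a s' * v s') / β))
      - β * Real.log (∑ a, Real.exp ((q s a + γ * ∑ s', T s a s' * w s') / β))| ≤ γ * c) :
    ContDiff ℝ 2 V := by
  classical
  set F : (Fin n → ℝ) × (Fin p → ℝ) → Fin p → ℝ := fun x s =>
    β * Real.log (∑ a : A, Real.exp
      ((∑ i, x.1 i * r s a i + γ * ∑ s', T s a s' * x.2 s') / β)) with hFdef
  have hFsmooth : ContDiff ℝ 2 F := by
    rw [contDiff_pi]
    intro s
    have hinner : ∀ a : A, ContDiff ℝ 2 (fun x : (Fin n → ℝ) × (Fin p → ℝ) =>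
        (∑ i, x.1 i * r s a i + γ * ∑ s', T s a s' * x.2 s') / β) := by
      intro a
      refine ContDiff.div_const (ContDiff.add ?_ ?_) β
      · exact ContDiff.sum fun i _ =>
          ((contDiff_apply ℝ ℝ i).comp contDiff_fst).mul contDiff_const
      · exact contDiff_const.mul (ContDiff.sum fun s' _ =>
          contDiff_const.mul ((contDiff_apply ℝ ℝ s').comp contDiff_snd))
    have hsum : ContDiff ℝ 2 (fun x : (Fin n → ℝ) × (Fin p → ℝ) =>
        ∑ a : A, Real.exp ((∑ i, x.1 i * r s a i + γ * ∑ s', T s a s' * x.2 s') / β)) :=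
      ContDiff.sum fun a _ => Real.contDiff_exp.comp (hinner a)
    exact contDiff_const.mul (hsum.log fun x =>
      ne_of_gt (Finset.sum_pos (fun a _ => Real.exp_pos _) Finset.univ_nonempty))
  set G : (Fin n → ℝ) × (Fin p → ℝ) → (Fin n → ℝ) × (Fin p → ℝ) :=
    fun x => (x.1, x.2 - F x) with hGdef
  have hGsmooth : ContDiff ℝ 2 G := contDiff_fst.prodMk (contDiff_snd.sub hFsmooth)
  rw [contDiff_iff_contDiffAt]
  intro θ₀
  have hFd : Differentiable ℝ F := hFsmooth.differentiable (by norm_num)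
  -- Lipschitz in the second variable
  have hlip : LipschitzWith ⟨γ, hγ0⟩ (fun v => F (θ₀, v)) := by
    apply LipschitzWith.of_dist_le_mul
    intro v w
    rw [dist_pi_le_iff (by positivity)]
    intro s
    rw [Real.dist_eq]
    exact hcomp (fun s a => ∑ i, θ₀ i * r s a i) v w (dist v w)
      (fun s' => by rw [← Real.dist_eq]; exact dist_le_pi_dist v w s') s
  set L := ((ContinuousLinearMap.fst ℝ (Fin n → ℝ) (Fin p → ℝ)).prod
      ((ContinuousLinearMap.snd ℝ (Fin n → ℝ) (Fin p → ℝ)) - fderiv ℝ F (θ₀, V θ₀))) with hLdef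
  have hGL : HasFDerivAt G L (θ₀, V θ₀) :=
    (hasFDerivAt_fst).prodMk ((hasFDerivAt_snd).sub (hFd (θ₀, V θ₀)).hasFDerivAt)
  -- derivative of v ↦ F (θ₀, v)
  have hgd : HasFDerivAt (fun v => F (θ₀, v))
      ((fderiv ℝ F (θ₀, V θ₀)).comp (ContinuousLinearMap.inr ℝ (Fin n → ℝ) (Fin p → ℝ)))
      (V θ₀) := by
    have h1 : HasFDerivAt (fun v : Fin p → ℝ => ((θ₀, v) : (Fin n → ℝ) × (Fin p → ℝ)))
        (ContinuousLinearMap.inr ℝ (Fin n → ℝ) (Fin p → ℝ)) (V θ₀) :=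
      (hasFDerivAt_const θ₀ _).prodMk (hasFDerivAt_id _)
    exact (hFd (θ₀, V θ₀)).hasFDerivAt.comp (V θ₀) h1
  have hnorm : ‖(fderiv ℝ F (θ₀, V θ₀)).comp
      (ContinuousLinearMap.inr ℝ (Fin n → ℝ) (Fin p → ℝ))‖ ≤ γ := hgd.le_of_lipschitz hlip
  have hker : ∀ u : (Fin n → ℝ) × (Fin p → ℝ), L u = 0 → u = 0 := by
    intro u hu
    have h1 : u.1 = 0 := congrArg Prod.fst hu
    have h2 : u.2 - fderiv ℝ F (θ₀, V θ₀) u = 0 := congrArg Prod.snd hu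
    have hu2 : u.2 = fderiv ℝ F (θ₀, V θ₀) u := by rwa [sub_eq_zero] at h2
    have hueq : u = (0, u.2) := by rw [← h1]
    have : ‖u.2‖ ≤ γ * ‖u.2‖ := by
      calc ‖u.2‖ = ‖(fderiv ℝ F (θ₀, V θ₀)).comp
            (ContinuousLinearMap.inr ℝ (Fin n → ℝ) (Fin p → ℝ)) u.2‖ := by
            rw [ContinuousLinearMap.comp_apply, ContinuousLinearMap.inr_apply, ← hueq, ← hu2]
        _ ≤ ‖(fderiv ℝ F (θ₀, V θ₀)).comp
            (ContinuousLinearMap.inr ℝ (Fin n → ℝ) (Fin p → ℝ))‖ * ‖u.2‖ :=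
            ContinuousLinearMap.le_opNorm _ _
        _ ≤ γ * ‖u.2‖ := mul_le_mul_of_nonneg_right hnorm (norm_nonneg _)
    have h20 : u.2 = 0 := by
      by_contra h
      have : (0:ℝ) < ‖u.2‖ := norm_pos_iff.2 h
      nlinarith
    rw [hueq, h20]; rfl
  have hinj : Function.Injective L := by
    intro u u' huu
    have : L (u - u') = 0 := by rw [map_sub, huu, sub_self]
    have := hker _ this
    rwa [sub_eq_zero] at this
  have hbij : Function.Bijective (L.toLinearMap) :=
    ⟨hinj, LinearMap.injective_iff_surjective.mp hinj⟩
  set eL := (LinearEquiv.ofBijective L.toLinearMap hbij).toContinuousLinearEquiv with heLdef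
  have heL : (eL : ((Fin n → ℝ) × (Fin p → ℝ)) →L[ℝ] ((Fin n → ℝ) × (Fin p → ℝ))) = L :=
    ContinuousLinearMap.ext fun u => rfl
  have hGL' : HasFDerivAt G
      (eL : ((Fin n → ℝ) × (Fin p → ℝ)) →L[ℝ] ((Fin n → ℝ) × (Fin p → ℝ))) (θ₀, V θ₀) := by
    rw [heL]; exact hGL
  have hGz₀ : G (θ₀, V θ₀) = (θ₀, 0) := by
    have : V θ₀ - F (θ₀, V θ₀) = 0 := by
      rw [sub_eq_zero]; funext s; exact hV θ₀ s
    simp only [hGdef, this]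
  have hn2 : (2 : WithTop ℕ∞) ≠ 0 := by norm_num
  have hCD : ContDiffAt ℝ 2 G (θ₀, V θ₀) := hGsmooth.contDiffAt
  set linv := hCD.localInverse hGL' hn2 with hlinvdef
  have hlinv_smooth : ContDiffAt ℝ 2 linv (G (θ₀, V θ₀)) := hCD.to_localInverse hGL' hn2
  have hri : ∀ᶠ y in nhds (G (θ₀, V θ₀)), G (linv y) = y :=
    (hCD.hasStrictFDerivAt' hGL' hn2).eventually_right_inverse
  have htend : Filter.Tendsto (fun θ' : Fin n → ℝ => ((θ', (0 : Fin p → ℝ))))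
      (nhds θ₀) (nhds (G (θ₀, V θ₀))) := by
    rw [hGz₀]
    exact Filter.Tendsto.prodMk_nhds Filter.tendsto_id tendsto_const_nhds
  have heventual : ∀ᶠ θ' in nhds θ₀, V θ' = (linv (θ', (0 : Fin p → ℝ))).2 := by
    filter_upwards [htend.eventually hri] with θ' hθ'
    have h1 : (linv (θ', (0 : Fin p → ℝ))).1 = θ' := congrArg Prod.fst hθ'
    have h2 : (linv (θ', (0 : Fin p → ℝ))).2 - F (linv (θ', (0 : Fin p → ℝ))) = 0 :=
      congrArg Prod.snd hθ'
    have hfix : ∀ s, (linv (θ', (0 : Fin p → ℝ))).2 s = β * Real.log (∑ a : A, Real.exp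
        ((∑ i, θ' i * r s a i
          + γ * ∑ s', T s a s' * (linv (θ', (0 : Fin p → ℝ))).2 s') / β)) := by
      intro s
      have h3 := congrFun h2 s
      have h4 : F (linv (θ', (0 : Fin p → ℝ))) s = β * Real.log (∑ a : A, Real.exp
          ((∑ i, θ' i * r s a i
            + γ * ∑ s', T s a s' * (linv (θ', (0 : Fin p → ℝ))).2 s') / β)) := by
        simp only [hFdef, h1]
      simp only [Pi.sub_apply, Pi.zero_apply] at h3
      rw [sub_eq_zero] at h3
      rw [h3, h4]
    exact huniq (fun s a => ∑ i, θ' i * r s a i) (V θ')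
      (linv (θ', (0 : Fin p → ℝ))).2 (fun s => hV θ' s) hfix
  have hsm : ContDiffAt ℝ 2 (fun θ' : Fin n → ℝ => (linv (θ', (0 : Fin p → ℝ))).2) θ₀ := by
    have h1 : ContDiffAt ℝ 2 (fun θ' : Fin n → ℝ => ((θ', (0 : Fin p → ℝ)))) θ₀ :=
      (contDiff_id.prodMk contDiff_const).contDiffAt
    have h2 : ContDiffAt ℝ 2 (fun θ' : Fin n → ℝ => linv (θ', (0 : Fin p → ℝ))) θ₀ := by
      refine ContDiffAt.comp θ₀ ?_ h1
      rwa [← hGz₀]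
    exact contDiff_snd.contDiffAt.comp θ₀ h2
  exact hsm.congr_of_eventuallyEq heventual


/-- directional derivative identity for the soft value function. -/
private lemma stmt7_grad {p n : ℕ} {A : Type*} [Fintype A] [Nonempty A]
    (T : Fin p → A → Fin p → ℝ) (γ : ℝ) {β : ℝ} (hβ : 0 < β)
    (r : Fin p → A → Fin n → ℝ)
    (V : (Fin n → ℝ) → Fin p → ℝ)
    (hV : ∀ θ s, V θ s = β * Real.log (∑ a : A, Real.exp
      ((∑ i, θ i * r s a i + γ * ∑ s', T s a s' * V θ s') / β)))
    (hVd : ∀ s, Differentiable ℝ (fun θ' => V θ' s))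
    (θ' : Fin n → ℝ) (s : Fin p) (w : Fin n → ℝ) :
    fderiv ℝ (fun x => V x s) θ' w =
      ∑ a, (Real.exp ((∑ i, θ' i * r s a i + γ * ∑ s', T s a s' * V θ' s') / β) /
            ∑ a', Real.exp ((∑ i, θ' i * r s a' i + γ * ∑ s', T s a' s' * V θ' s') / β)) *
        ((∑ i, w i * r s a i) + γ * ∑ s', T s a s' * fderiv ℝ (fun x => V x s') θ' w) := by
  classical
  have hline : ∀ s' : Fin p, HasDerivAt (fun t : ℝ => V (θ' + t • w) s')
      (fderiv ℝ (fun x => V x s') θ' w) 0 := by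
    intro s'
    have h1 : HasDerivAt (fun t : ℝ => θ' + t • w) w 0 := by
      simpa using ((hasDerivAt_id (0:ℝ)).smul_const w).const_add θ'
    have h2 : HasFDerivAt (fun x => V x s') (fderiv ℝ (fun x => V x s') θ')
        (θ' + (0:ℝ) • w) := by
      simpa using (hVd s' θ').hasFDerivAt
    simpa [Function.comp_def] using h2.comp_hasDerivAt 0 h1
  set q : A → ℝ → ℝ := fun a t =>
    ∑ i, (θ' + t • w) i * r s a i + γ * ∑ s', T s a s' * V (θ' + t • w) s' with hqdef
  set d : A → ℝ := fun a =>
    (∑ i, w i * r s a i) + γ * ∑ s', T s a s' * fderiv ℝ (fun x => V x s') θ' w with hddef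
  have hq : ∀ a, HasDerivAt (q a) (d a) 0 := by
    intro a
    refine HasDerivAt.add ?_ ?_
    · refine HasDerivAt.fun_sum fun i _ => ?_
      have : HasDerivAt (fun t : ℝ => (θ' i + t * w i) * r s a i) (w i * r s a i) 0 := by
        have h1 : HasDerivAt (fun t : ℝ => θ' i + t * w i) (w i) 0 := by
          simpa using (hasDerivAt_mul_const (w i)).const_add (θ' i)
        simpa using h1.mul_const (r s a i)
      exact this
    · exact (HasDerivAt.fun_sum fun s' _ => ((hline s').const_mul (T s a s'))).const_mul γ
  have hq0 : ∀ a, q a 0 = ∑ i, θ' i * r s a i + γ * ∑ s', T s a s' * V θ' s' := by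
    intro a; simp [hqdef]
  set S : ℝ → ℝ := fun t => ∑ a, Real.exp (q a t / β) with hSdef
  have hS : HasDerivAt S (∑ a, Real.exp (q a 0 / β) * (d a / β)) 0 :=
    HasDerivAt.fun_sum fun a _ => ((hq a).div_const β).exp
  have hS0 : 0 < S 0 := Finset.sum_pos (fun a _ => Real.exp_pos _) Finset.univ_nonempty
  have hψ : HasDerivAt (fun t : ℝ => V (θ' + t • w) s)
      (β * ((∑ a, Real.exp (q a 0 / β) * (d a / β)) / S 0)) 0 := by
    have hfun : (fun t : ℝ => V (θ' + t • w) s) = fun t => β * Real.log (S t) :=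
      funext fun t => hV _ s
    rw [hfun]
    exact (hS.log hS0.ne').const_mul β
  have huniq := ((hline s).unique hψ)
  rw [huniq]
  have hS0eq : S 0 = ∑ a', Real.exp
      ((∑ i, θ' i * r s a' i + γ * ∑ s', T s a' s' * V θ' s') / β) := by
    refine Finset.sum_congr rfl fun a _ => by rw [hq0 a]
  calc β * ((∑ a, Real.exp (q a 0 / β) * (d a / β)) / S 0)
      = ∑ a, (Real.exp (q a 0 / β) / S 0) * d a := by
        rw [Finset.sum_div, Finset.mul_sum]
        refine Finset.sum_congr rfl fun a _ => ?_
        field_simp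
    _ = ∑ a, (Real.exp ((∑ i, θ' i * r s a i + γ * ∑ s', T s a s' * V θ' s') / β) /
            ∑ a', Real.exp ((∑ i, θ' i * r s a' i + γ * ∑ s', T s a' s' * V θ' s') / β)) *
        ((∑ i, w i * r s a i) + γ * ∑ s', T s a s' * fderiv ℝ (fun x => V x s') θ' w) := by
        refine Finset.sum_congr rfl fun a _ => ?_
        rw [hq0 a, hS0eq, hddef]

/-- derivative along a line. -/
private lemma stmt7_linederiv {n : ℕ} (f : (Fin n → ℝ) → ℝ) (θ' w : Fin n → ℝ)
    (hf : DifferentiableAt ℝ f θ') :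
    HasDerivAt (fun t : ℝ => f (θ' + t • w)) (fderiv ℝ f θ' w) 0 := by
  have h1 : HasDerivAt (fun t : ℝ => θ' + t • w) w 0 := by
    simpa using ((hasDerivAt_id (0:ℝ)).smul_const w).const_add θ'
  have h2 : HasFDerivAt f (fderiv ℝ f θ') (θ' + (0:ℝ) • w) := by
    simpa using hf.hasFDerivAt
  simpa [Function.comp_def] using h2.comp_hasDerivAt 0 h1

/-- derivative of the Q-function along a line. -/
private lemma stmt7_qderiv {p n : ℕ} {A : Type*} [Fintype A]
    (T : Fin p → A → Fin p → ℝ) (γ : ℝ)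
    (r : Fin p → A → Fin n → ℝ)
    (V : (Fin n → ℝ) → Fin p → ℝ)
    (hVd : ∀ s, Differentiable ℝ (fun θ' => V θ' s))
    (θ' w : Fin n → ℝ) (s : Fin p) (a : A) :
    HasDerivAt (fun t : ℝ =>
        ∑ i, (θ' + t • w) i * r s a i + γ * ∑ s', T s a s' * V (θ' + t • w) s')
      ((∑ i, w i * r s a i) + γ * ∑ s', T s a s' * fderiv ℝ (fun x => V x s') θ' w) 0 := by
  refine HasDerivAt.add ?_ ?_
  · refine HasDerivAt.fun_sum fun i _ => ?_
    have h1 : HasDerivAt (fun t : ℝ => θ' i + t * w i) (w i) 0 := by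
      simpa using (hasDerivAt_mul_const (w i)).const_add (θ' i)
    exact h1.mul_const (r s a i)
  · exact (HasDerivAt.fun_sum fun s' _ =>
      ((stmt7_linederiv (fun x => V x s') θ' w (hVd s' θ')).const_mul (T s a s'))).const_mul γ

private lemma stmt7_single_sum {n : ℕ} (j : Fin n) (c : Fin n → ℝ) :
    ∑ i, (Pi.single j 1 : Fin n → ℝ) i * c i = c j := by
  simp [Pi.single_apply]

/-- derivative of a softmax-weighted sum. -/
private lemma stmt7_softmax_deriv {A S' : Type*} [Fintype A] [Nonempty A] [Fintype S']
    {β : ℝ} (hβ : 0 < β) (q : A → ℝ → ℝ) (d : A → ℝ) (hq : ∀ a, HasDerivAt (q a) (d a) 0)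
    (u : S' → ℝ → ℝ) (h : S' → ℝ) (hu : ∀ s', HasDerivAt (u s') (h s') 0)
    (c : A → ℝ) (γ : ℝ) (Tw : A → S' → ℝ) :
    HasDerivAt (fun t => ∑ a, (Real.exp (q a t / β) / ∑ a', Real.exp (q a' t / β)) *
        (c a + γ * ∑ s', Tw a s' * u s' t))
      (∑ a, ((Real.exp (q a 0 / β) / ∑ a', Real.exp (q a' 0 / β)) *
          ((d a - ∑ a', (Real.exp (q a' 0 / β) / ∑ a'', Real.exp (q a'' 0 / β)) * d a') / β) *
          (c a + γ * ∑ s', Tw a s' * u s' 0)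
        + (Real.exp (q a 0 / β) / ∑ a', Real.exp (q a' 0 / β)) *
          (γ * ∑ s', Tw a s' * h s'))) 0 := by
  refine HasDerivAt.fun_sum fun a _ => ?_
  have h1 : HasDerivAt (fun t => Real.exp (q a t / β)) (Real.exp (q a 0 / β) * (d a / β)) 0 :=
    ((hq a).div_const β).exp
  have hS : HasDerivAt (fun t => ∑ a', Real.exp (q a' t / β))
      (∑ a', Real.exp (q a' 0 / β) * (d a' / β)) 0 :=
    HasDerivAt.fun_sum fun a' _ => ((hq a').div_const β).exp
  have hS0 : (0:ℝ) < ∑ a', Real.exp (q a' 0 / β) :=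
    Finset.sum_pos (fun a' _ => Real.exp_pos _) Finset.univ_nonempty
  have h2 := h1.fun_div hS hS0.ne'
  have h3 : HasDerivAt (fun t => c a + γ * ∑ s', Tw a s' * u s' t)
      (γ * ∑ s', Tw a s' * h s') 0 :=
    ((HasDerivAt.fun_sum fun s' _ => (hu s').const_mul (Tw a s')).const_mul γ).const_add (c a)
  have h4 := h2.fun_mul h3
  refine h4.congr_deriv ?_
  have e1 : ∑ a', Real.exp (q a' 0 / β) * (d a' / β)
      = (∑ a', Real.exp (q a' 0 / β) * d a') / β := by
    rw [Finset.sum_div]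
    exact Finset.sum_congr rfl fun a' _ => by ring
  have e2 : ∑ a', Real.exp (q a' 0 / β) / (∑ a'', Real.exp (q a'' 0 / β)) * d a'
      = (∑ a', Real.exp (q a' 0 / β) * d a') / (∑ a'', Real.exp (q a'' 0 / β)) := by
    rw [Finset.sum_div]
    exact Finset.sum_congr rfl fun a' _ => by ring
  congr 1
  rw [e1, e2]
  field_simp
set_option maxHeartbeats 1600000 in
/-- Hessian of the soft fixed point (Proposition 3.5).  With `V θ` the fixed point of
the soft Bellman operator `T_θ`, `π` the softmax policy at parameter `θ`, `W` the unique
solution of the vector Bellman evaluation equation for `π`, `Qvec` the vector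
action-value function, `B s` the covariance matrix of `Qvec s ·` under `π(·|s)`, and
`Tpi` the induced state-transition matrix, the map `θ' ↦ V θ' s` is twice (continuously)
differentiable for each state `s`, and its Hessian at `θ` is
`H[V(θ)(s_k)] = (1/β) Σ_l [(I − γ Tπ)⁻¹]_{kl} B(s_l)`. -/
theorem stmt_7 {p n : ℕ} {A : Type*} [Fintype A] [Nonempty A]
    (T : Fin p → A → Fin p → ℝ)
    (hT0 : ∀ s a s', 0 ≤ T s a s') (hT1 : ∀ s a, ∑ s', T s a s' = 1)
    (γ : ℝ) (hγ0 : 0 ≤ γ) (hγ1 : γ < 1)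
    (β : ℝ) (hβ : 0 < β)
    (r : Fin p → A → Fin n → ℝ)
    (V : (Fin n → ℝ) → Fin p → ℝ)
    (hV : ∀ θ s, V θ s = β * Real.log (∑ a : A, Real.exp
      ((∑ i, θ i * r s a i + γ * ∑ s', T s a s' * V θ s') / β)))
    (θ : Fin n → ℝ)
    (Q : Fin p → A → ℝ)
    (hQ : ∀ s a, Q s a = ∑ i, θ i * r s a i + γ * ∑ s', T s a s' * V θ s')
    (π : Fin p → A → ℝ)
    (hπ : ∀ s a, π s a = Real.exp (Q s a / β) / ∑ a', Real.exp (Q s a' / β))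
    (W : Fin p → Fin n → ℝ)
    (hW : ∀ s i, W s i = ∑ a, π s a * (r s a i + γ * ∑ s', T s a s' * W s' i))
    (Qvec : Fin p → A → Fin n → ℝ)
    (hQvec : ∀ s a i, Qvec s a i = r s a i + γ * ∑ s', T s a s' * W s' i)
    (Qbar : Fin p → Fin n → ℝ)
    (hQbar : ∀ s i, Qbar s i = ∑ a, π s a * Qvec s a i)
    (B : Fin p → Matrix (Fin n) (Fin n) ℝ)
    (hB : ∀ s i j, B s i j = ∑ a, π s a *
      ((Qvec s a i - Qbar s i) * (Qvec s a j - Qbar s j)))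
    (Tpi : Matrix (Fin p) (Fin p) ℝ)
    (hTpi : ∀ i j, Tpi i j = ∑ a, π i a * T i a j) :
    (∀ s, ContDiff ℝ 2 (fun θ' => V θ' s)) ∧
    ∀ (k : Fin p) (i j : Fin n),
      iteratedFDeriv ℝ 2 (fun θ' => V θ' k) θ ![Pi.single i 1, Pi.single j 1]
        = (1 / β) * ∑ l, (1 - γ • Tpi)⁻¹ k l * B l i j := by
  classical
  -- basic softmax facts
  have hsumQpos : ∀ s, (0:ℝ) < ∑ a', Real.exp (Q s a' / β) :=
    fun s => Finset.sum_pos (fun a _ => Real.exp_pos _) Finset.univ_nonempty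
  have hπ0 : ∀ s a, 0 ≤ π s a :=
    fun s a => by rw [hπ]; exact div_nonneg (Real.exp_pos _).le (hsumQpos s).le
  have hπ1 : ∀ s, ∑ a, π s a = 1 := by
    intro s
    rw [Finset.sum_congr rfl fun a _ => hπ s a, ← Finset.sum_div]
    exact div_self (hsumQpos s).ne'
  -- smoothness
  have hVsm : ContDiff ℝ 2 V :=
    stmt7_smooth T hT0 hT1 hγ0 hγ1 hβ r V hV
      (fun q v w hv hw => stmt7_fixed_unique hγ0 hγ1 hβ T hT0 hT1 q v w hv hw)
      (fun q v w c h s => stmt7_comp hγ0 hβ T hT0 hT1 q v w h s)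
  have hCD2 : ∀ s, ContDiff ℝ 2 (fun θ' => V θ' s) :=
    fun s => (contDiff_apply ℝ ℝ s).comp hVsm
  have hVd : ∀ s, Differentiable ℝ (fun θ' => V θ' s) :=
    fun s => (hCD2 s).differentiable two_ne_zero
  -- first derivative equals W
  have hfd1 : ∀ (j : Fin n) (s : Fin p),
      fderiv ℝ (fun x => V x s) θ (Pi.single j 1) = W s j := by
    intro j
    have hu : ∀ s, fderiv ℝ (fun x => V x s) θ (Pi.single j 1)
        = ∑ a, π s a * (r s a j
          + γ * ∑ s', T s a s' * fderiv ℝ (fun x => V x s') θ (Pi.single j 1)) := by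
      intro s
      rw [stmt7_grad T γ hβ r V hV hVd θ s (Pi.single j 1)]
      refine Finset.sum_congr rfl fun a _ => ?_
      rw [stmt7_single_sum j (r s a)]
      simp only [← hQ]
      rw [← hπ s a]
    have := stmt7_lineq hγ0 hγ1 T hT0 hT1 π hπ0 hπ1 (fun s a => r s a j)
      (fun s => fderiv ℝ (fun x => V x s) θ (Pi.single j 1)) (fun s => W s j)
      hu (fun s => hW s j)
    exact fun s => congrFun this s
  -- matrix invertibility
  have hTpi0 : ∀ s s', 0 ≤ Tpi s s' := fun s s' => by
    rw [hTpi]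
    exact Finset.sum_nonneg fun a _ => mul_nonneg (hπ0 s a) (hT0 s a s')
  have hTpi1 : ∀ s, ∑ s', Tpi s s' = 1 := by
    intro s
    rw [Finset.sum_congr rfl fun s' _ => hTpi s s', Finset.sum_comm]
    calc ∑ a, ∑ s', π s a * T s a s' = ∑ a, π s a * ∑ s', T s a s' := by
          simp [Finset.mul_sum]
      _ = 1 := by simp only [hT1]; simpa using hπ1 s
  have hdet : (1 - γ • Tpi).det ≠ 0 := by
    intro hd
    obtain ⟨x, hx0, hxv⟩ := Matrix.exists_mulVec_eq_zero_iff.2 hd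
    apply hx0
    refine stmt7_contract hγ0 hγ1 (fun s s' => Tpi s s') hTpi0 hTpi1 x fun s => ?_
    have := congrFun hxv s
    simp only [Matrix.mulVec, dotProduct, Matrix.sub_apply, Matrix.smul_apply,
      Matrix.one_apply, Pi.zero_apply, smul_eq_mul, sub_mul, ite_mul, one_mul, zero_mul,
      Finset.sum_sub_distrib, Finset.sum_ite_eq, Finset.mem_univ, if_true] at this
    have h2 : x s - ∑ s', γ * Tpi s s' * x s' = 0 := this
    rw [sub_eq_zero] at h2
    rw [h2, Finset.mul_sum]
    exact Finset.sum_congr rfl fun s' _ => by ring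
  -- second derivative computation
  have hkey : ∀ (i j : Fin n) (k : Fin p),
      fderiv ℝ (fun x => fderiv ℝ (fun y => V y k) x (Pi.single j 1)) θ (Pi.single i 1)
        = (1/β) * ∑ l, (1 - γ • Tpi)⁻¹ k l * B l i j := by
    intro i j
    set H : Fin p → ℝ := fun s =>
      fderiv ℝ (fun x => fderiv ℝ (fun y => V y s) x (Pi.single j 1)) θ (Pi.single i 1)
      with hHdef
    have hgC1 : ∀ s, ContDiff ℝ 1 (fun x => fderiv ℝ (fun y => V y s) x (Pi.single j 1)) :=
      fun s => ContDiff.clm_apply ((hCD2 s).fderiv_right (by norm_num)) contDiff_const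
    have hgd : ∀ s, DifferentiableAt ℝ
        (fun x => fderiv ℝ (fun y => V y s) x (Pi.single j 1)) θ :=
      fun s => ((hgC1 s).differentiable one_ne_zero) θ
    -- the fixed-point equation for H
    have hH : ∀ s, H s = (1/β) * B s i j + γ * ∑ s', Tpi s s' * H s' := by
      intro s
      -- derivative of the Q-functions along the i-th coordinate line
      have hqd : ∀ a : A, HasDerivAt (fun t : ℝ =>
            ∑ i', (θ + t • (Pi.single i 1 : Fin n → ℝ)) i' * r s a i'
              + γ * ∑ s', T s a s' * V (θ + t • (Pi.single i 1 : Fin n → ℝ)) s')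
          (Qvec s a i) 0 := by
        intro a
        have h := stmt7_qderiv T γ r V hVd θ (Pi.single i 1) s a
        have heq : (∑ i', (Pi.single i 1 : Fin n → ℝ) i' * r s a i')
            + γ * ∑ s', T s a s' * fderiv ℝ (fun x => V x s') θ (Pi.single i 1)
            = Qvec s a i := by
          rw [stmt7_single_sum i (r s a), hQvec]
          congr 2
          exact Finset.sum_congr rfl fun s' _ => by rw [hfd1 i s']
        rw [heq] at h
        exact h
      -- derivative of gradient coordinates along the line
      have hline : ∀ s', HasDerivAt (fun t : ℝ =>
          fderiv ℝ (fun y => V y s') (θ + t • (Pi.single i 1 : Fin n → ℝ)) (Pi.single j 1)) (H s') 0 :=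
        fun s' => stmt7_linederiv _ θ (Pi.single i 1) (hgd s')
      -- softmax derivative of the right-hand side
      have hR := stmt7_softmax_deriv hβ
        (fun a t => ∑ i', (θ + t • (Pi.single i 1 : Fin n → ℝ)) i' * r s a i'
          + γ * ∑ s', T s a s' * V (θ + t • (Pi.single i 1 : Fin n → ℝ)) s')
        (fun a => Qvec s a i) hqd
        (fun s' t => fderiv ℝ (fun y => V y s') (θ + t • (Pi.single i 1 : Fin n → ℝ)) (Pi.single j 1))
        H hline
        (fun a => ∑ i', (Pi.single j 1 : Fin n → ℝ) i' * r s a i')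
        γ (fun a s' => T s a s')
      -- the left-hand side function coincides with the softmax expression
      have hfun : (fun t : ℝ =>
            fderiv ℝ (fun y => V y s) (θ + t • (Pi.single i 1 : Fin n → ℝ)) (Pi.single j 1))
          = (fun t : ℝ => ∑ a, (Real.exp ((∑ i', (θ + t • (Pi.single i 1 : Fin n → ℝ)) i' * r s a i'
              + γ * ∑ s', T s a s' * V (θ + t • (Pi.single i 1 : Fin n → ℝ)) s') / β) /
                ∑ a', Real.exp ((∑ i', (θ + t • (Pi.single i 1 : Fin n → ℝ)) i' * r s a' i'
              + γ * ∑ s', T s a' s' * V (θ + t • (Pi.single i 1 : Fin n → ℝ)) s') / β)) *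
            ((∑ i', (Pi.single j 1 : Fin n → ℝ) i' * r s a i')
              + γ * ∑ s', T s a s' * fderiv ℝ (fun y => V y s')
                  (θ + t • (Pi.single i 1 : Fin n → ℝ)) (Pi.single j 1))) :=
        funext fun t => stmt7_grad T γ hβ r V hV hVd (θ + t • (Pi.single i 1 : Fin n → ℝ)) s (Pi.single j 1)
      have huniq := (hline s).unique (by rw [hfun]; exact hR)
      -- now simplify the value of the derivative
      rw [huniq]
      simp only [zero_smul, add_zero] at *
      simp only [← hQ, hfd1, stmt7_single_sum] at *
      simp only [← hπ] at *
      -- now the expression is in terms of π, Qvec, W, H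
      have hsumπQ : ∑ a', π s a' * Qvec s a' i = Qbar s i := (hQbar s i).symm
      rw [hsumπQ]
      have hterm : ∀ a : A, π s a * ((Qvec s a i - Qbar s i) / β)
            * (r s a j + γ * ∑ s', T s a s' * W s' j)
          + π s a * (γ * ∑ s', T s a s' * H s')
          = π s a * ((Qvec s a i - Qbar s i) * Qvec s a j / β
            + γ * ∑ s', T s a s' * H s') := by
        intro a
        rw [← hQvec]
        ring
      rw [Finset.sum_congr rfl fun a _ => hterm a]
      rw [stmt7_expand γ T π (fun s a => (Qvec s a i - Qbar s i) * Qvec s a j / β) H s]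
      have hswap : ∑ s', (∑ a, π s a * T s a s') * H s' = ∑ s', Tpi s s' * H s' :=
        Finset.sum_congr rfl fun s' _ => by rw [← hTpi]
      rw [hswap]
      congr 1
      -- covariance identity
      have h1 : ∑ a, π s a * (Qvec s a i - Qbar s i) = 0 := by
        simp only [mul_sub]
        rw [Finset.sum_sub_distrib, ← hQbar s i, ← Finset.sum_mul, hπ1 s]
        ring
      calc ∑ a, π s a * ((Qvec s a i - Qbar s i) * Qvec s a j / β)
          = (1/β) * ∑ a, π s a * ((Qvec s a i - Qbar s i) * Qvec s a j) := by
            rw [Finset.mul_sum]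
            exact Finset.sum_congr rfl fun a _ => by ring
        _ = (1/β) * ((∑ a, π s a * ((Qvec s a i - Qbar s i) * (Qvec s a j - Qbar s j)))
              + Qbar s j * ∑ a, π s a * (Qvec s a i - Qbar s i)) := by
            congr 1
            rw [Finset.mul_sum, ← Finset.sum_add_distrib]
            exact Finset.sum_congr rfl fun a _ => by ring
        _ = (1/β) * B s i j := by rw [h1, mul_zero, add_zero, ← hB]
    -- solve the linear system
    intro k
    have hMH : (1 - γ • Tpi).mulVec H = fun l => (1/β) * B l i j := by
      funext l
      have := hH l
      simp only [Matrix.mulVec, dotProduct, Matrix.sub_apply, Matrix.smul_apply,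
        Matrix.one_apply, smul_eq_mul, sub_mul, ite_mul, one_mul, zero_mul,
        Finset.sum_sub_distrib, Finset.sum_ite_eq, Finset.mem_univ, if_true]
      rw [this]
      have hs2 : ∑ x, γ * Tpi l x * H x = γ * ∑ x, Tpi l x * H x := by
        rw [Finset.mul_sum]
        exact Finset.sum_congr rfl fun x _ => by ring
      rw [hs2]
      ring
    have hinvH : H = (1 - γ • Tpi)⁻¹.mulVec (fun l => (1/β) * B l i j) := by
      rw [← hMH, Matrix.mulVec_mulVec, Matrix.nonsing_inv_mul _ (isUnit_iff_ne_zero.2 hdet),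
        Matrix.one_mulVec]
    have h5 : H k = (1 - γ • Tpi)⁻¹.mulVec (fun l => (1/β) * B l i j) k := congrFun hinvH k
    have h6 : H k = fderiv ℝ (fun x => fderiv ℝ (fun y => V y k) x (Pi.single j 1)) θ
        (Pi.single i 1) := rfl
    rw [← h6, h5]
    simp only [Matrix.mulVec, dotProduct]
    rw [Finset.mul_sum]
    exact Finset.sum_congr rfl fun l _ => by ring
  -- conclusion
  refine ⟨fun s => hCD2 s, fun k i j => ?_⟩
  rw [iteratedFDeriv_two_apply]
  have hm0 : (![(Pi.single i 1 : Fin n → ℝ), Pi.single j 1]) 0 = Pi.single i 1 := rfl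
  have hm1 : (![(Pi.single i 1 : Fin n → ℝ), Pi.single j 1]) 1 = Pi.single j 1 := rfl
  rw [hm0, hm1]
  have hdd : DifferentiableAt ℝ (fderiv ℝ (fun θ' => V θ' k)) θ :=
    (((hCD2 k).fderiv_right (by norm_num)).differentiable one_ne_zero) θ
  have hswap := fderiv_clm_apply (𝕜 := ℝ) (c := fderiv ℝ (fun θ' => V θ' k))
    (u := fun _ => (Pi.single j 1 : Fin n → ℝ)) hdd (differentiableAt_const _)
  have h2 : fderiv ℝ (fun x => fderiv ℝ (fun θ' => V θ' k) x (Pi.single j 1)) θ (Pi.single i 1)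
      = fderiv ℝ (fderiv ℝ (fun θ' => V θ' k)) θ (Pi.single i 1) (Pi.single j 1) := by
    rw [hswap]
    simp
  rw [← h2]
  exact hkey i j k
end

section
/- Linear convergence of inexact projected gradient descent for strongly convex smooth objectives (abstract form of Theorem 3.6): let C ⊆ ℝ^n be a nonempty closed convex set, f : ℝ^n → ℝ differentiable with ∇f α-Lipschitz (α > 0) and f λ-strongly convex with 0 < λ ≤ α, and let x* be the minimizer of f over C. Suppose a sequence (x^m) in C satisfies x^{m+1} = proj_C( x^m − (1/α)(∇f(x^m) + e_m) ) where the errors satisfy ‖e_m‖₂ ≤ E for all m and some E ≥ 0. Then for every m ≥ 1, ‖x^m − x*‖₂ ≤ (1 − λ/α)^m ‖x^0 − x*‖₂ + E/λ. -/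
open Set Filter Topology InnerProductSpace
open scoped RealInnerProductSpace

variable {E : Type*} [NormedAddCommGroup E] [InnerProductSpace ℝ E] [CompleteSpace E]

/-- Derivative of `F` along a line, given a gradient field. -/
lemma pgd_line (F : E → ℝ) (G : E → E) (hG : ∀ z, HasGradientAt F (G z) z) (x u : E) (t : ℝ) :
    HasDerivAt (fun s : ℝ => F (x + s • u)) ⟪G (x + t • u), u⟫_ℝ t := by
  have hc : HasDerivAt (fun s : ℝ => x + s • u) u t := by
    simpa using ((hasDerivAt_id t).smul_const u).const_add x
  have h := (hG (x + t • u)).hasFDerivAt.comp_hasDerivAt t hc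
  simpa [toDual_apply_apply, Function.comp_def] using h

lemma pgd_grad_sub {F1 F2 : E → ℝ} {G1 G2 z : E} (h1 : HasGradientAt F1 G1 z)
    (h2 : HasGradientAt F2 G2 z) : HasGradientAt (fun w => F1 w - F2 w) (G1 - G2) z := by
  have h := h1.hasFDerivAt.sub h2.hasFDerivAt
  rw [hasGradientAt_iff_hasFDerivAt, map_sub]
  exact h

/-- Gradient of `w ↦ c/2 * ‖w‖²` is `c • z`. -/
lemma pgd_sq_grad (c : ℝ) (z : E) : HasGradientAt (fun w : E => c / 2 * ‖w‖ ^ 2) (c • z) z := by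
  have h1 : HasFDerivAt (fun w : E => ⟪w, w⟫_ℝ)
      ((fderivInnerCLM ℝ (z, z)).comp ((ContinuousLinearMap.id ℝ E).prod
        (ContinuousLinearMap.id ℝ E))) z := (hasFDerivAt_id z).inner ℝ (hasFDerivAt_id z)
  have h2 := h1.const_mul (c / 2)
  have heq : (fun w : E => c / 2 * ⟪w, w⟫_ℝ) = fun w : E => c / 2 * ‖w‖ ^ 2 := by
    funext w; rw [real_inner_self_eq_norm_sq]
  rw [heq] at h2
  rw [hasGradientAt_iff_hasFDerivAt]
  convert h2 using 1
  · rfl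
  ext v
  simp [toDual_apply_apply, fderivInnerCLM_apply, real_inner_smul_left, real_inner_comm z v]
  ring

/-- First-order lower bound from monotone gradient (via MVT). -/
lemma pgd_mono_foc (F : E → ℝ) (G : E → E) (hG : ∀ z, HasGradientAt F (G z) z)
    (hmono : ∀ a b, 0 ≤ ⟪G a - G b, a - b⟫_ℝ) (x y : E) :
    F x + ⟪G x, y - x⟫_ℝ ≤ F y := by
  set u := y - x with hu
  have hd : ∀ t : ℝ, HasDerivAt (fun s : ℝ => F (x + s • u)) ⟪G (x + t • u), u⟫_ℝ t :=
    pgd_line F G hG x u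
  have hcont : ContinuousOn (fun s : ℝ => F (x + s • u)) (Icc 0 1) :=
    (fun t _ => ((hd t).differentiableAt.continuousAt.continuousWithinAt))
  obtain ⟨c, hc, hceq⟩ := exists_hasDerivAt_eq_slope (fun s : ℝ => F (x + s • u))
    (fun t => ⟪G (x + t • u), u⟫_ℝ) zero_lt_one hcont (fun t _ => hd t)
  have h0 : x + (0 : ℝ) • u = x := by simp
  have h1 : x + (1 : ℝ) • u = y := by simp [hu]
  rw [h1, h0] at hceq
  have hm := hmono (x + c • u) x
  have hsub : (x + c • u) - x = c • u := by abel
  rw [hsub, inner_sub_left, real_inner_smul_right, real_inner_smul_right] at hm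
  have hge : ⟪G x, u⟫_ℝ ≤ ⟪G (x + c • u), u⟫_ℝ := by
    rcases le_or_gt (⟪G x, u⟫_ℝ) (⟪G (x + c • u), u⟫_ℝ) with h | h
    · exact h
    · exfalso; nlinarith [hc.1]
  have : ⟪G (x + c • u), u⟫_ℝ = F y - F x := by
    rw [hceq]; ring
  linarith

/-- First-order lower bound for a convex function with gradient. -/
lemma pgd_convex_foc (F : E → ℝ) (G : E → E) (hG : ∀ z, HasGradientAt F (G z) z)
    (hconv : ConvexOn ℝ Set.univ F) (x y : E) :
    F x + ⟪G x, y - x⟫_ℝ ≤ F y := by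
  set u := y - x with hu
  set φ : ℝ → ℝ := fun s => F (x + s • u) with hφ
  have hd : ∀ t : ℝ, HasDerivAt φ ⟪G (x + t • u), u⟫_ℝ t := pgd_line F G hG x u
  have hd0 : HasDerivAt φ ⟪G x, u⟫_ℝ 0 := by simpa using hd 0
  have hconvφ : ConvexOn ℝ Set.univ φ := by
    have h := hconv.comp_affineMap (AffineMap.lineMap x y)
    have : (F ∘ (AffineMap.lineMap x y)) = φ := by
      funext s
      simp [hφ, AffineMap.lineMap_apply, hu, add_comm]
    rw [this] at h
    simpa using h
  have htend : Tendsto (slope φ 0) (𝓝[>] (0:ℝ)) (𝓝 ⟪G x, u⟫_ℝ) :=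
    (hasDerivAt_iff_tendsto_slope.mp hd0).mono_left
      (nhdsWithin_mono _ (fun t ht => ne_of_gt ht))
  have hev : ∀ᶠ t in 𝓝[>] (0:ℝ), slope φ 0 t ≤ φ 1 - φ 0 := by
    filter_upwards [Ioc_mem_nhdsGT zero_lt_one] with t ht
    have := hconvφ.secant_mono (a := 0) (x := t) (y := 1) trivial trivial trivial
      (ne_of_gt ht.1) one_ne_zero ht.2
    simp only [slope, vsub_eq_sub, sub_zero]
    rw [div_eq_inv_mul] at this
    simpa using this
  have hle : ⟪G x, u⟫_ℝ ≤ φ 1 - φ 0 := le_of_tendsto htend hev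
  have h0 : φ 0 = F x := by simp [hφ]
  have h1 : φ 1 = F y := by simp [hφ, hu]
  linarith [hle.trans_eq (by rw [h0, h1])]

/-- Descent lemma from a one-sided Lipschitz-type bound on the gradient. -/
lemma pgd_descent (F : E → ℝ) (G : E → E) (L : ℝ) (hG : ∀ z, HasGradientAt F (G z) z)
    (hmono : ∀ a b, ⟪G a - G b, a - b⟫_ℝ ≤ L * ‖a - b‖ ^ 2) (a b : E) :
    F b ≤ F a + ⟪G a, b - a⟫_ℝ + L / 2 * ‖b - a‖ ^ 2 := by
  set ψ : E → ℝ := fun z => L / 2 * ‖z‖ ^ 2 - F z with hψ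
  set Gψ : E → E := fun z => L • z - G z with hGψ
  have hGψ' : ∀ z, HasGradientAt ψ (Gψ z) z := fun z =>
    pgd_grad_sub (pgd_sq_grad L z) (hG z)
  have hmonoψ : ∀ p q, 0 ≤ ⟪Gψ p - Gψ q, p - q⟫_ℝ := by
    intro p q
    have h1 : Gψ p - Gψ q = L • (p - q) - (G p - G q) := by
      simp [hGψ, smul_sub]; abel
    rw [h1, inner_sub_left, real_inner_smul_left, real_inner_self_eq_norm_sq]
    have := hmono p q
    linarith
  have h := pgd_mono_foc ψ Gψ hGψ' hmonoψ a b
  have hnorm : ‖b - a‖ ^ 2 = ‖b‖ ^ 2 - 2 * ⟪b, a⟫_ℝ + ‖a‖ ^ 2 := norm_sub_sq_real b a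
  have hinner : ⟪a, b - a⟫_ℝ = ⟪a, b⟫_ℝ - ‖a‖ ^ 2 := by
    rw [inner_sub_right, real_inner_self_eq_norm_sq]
  have hcomm : ⟪b, a⟫_ℝ = ⟪a, b⟫_ℝ := real_inner_comm a b
  simp only [hψ, hGψ, inner_sub_left, real_inner_smul_left] at h
  rw [hinner] at h
  rw [hnorm, hcomm]
  linarith [h]

/-- (Half-)co-coercivity from first-order convexity bound plus descent lemma. -/
lemma pgd_coco (h : E → ℝ) (gh : E → E) (L : ℝ)
    (hfoc : ∀ p q, h p + ⟪gh p, q - p⟫_ℝ ≤ h q)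
    (hdesc : ∀ p q, h q ≤ h p + ⟪gh p, q - p⟫_ℝ + L / 2 * ‖q - p‖ ^ 2)
    (hL : 0 ≤ L) (p q : E) :
    ‖gh p - gh q‖ ^ 2 ≤ 2 * L * ⟪gh p - gh q, p - q⟫_ℝ := by
  obtain ⟨d, hd⟩ : ∃ d, d = gh p - gh q := ⟨_, rfl⟩
  rw [← hd]
  have htd : ⟪gh p, d⟫_ℝ = ⟪gh q, d⟫_ℝ + ‖d‖ ^ 2 := by
    have h1 : ⟪gh p, d⟫_ℝ - ⟪gh q, d⟫_ℝ = ⟪d, d⟫_ℝ := by rw [← inner_sub_left, ← hd]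
    rw [real_inner_self_eq_norm_sq] at h1; linarith
  rcases eq_or_lt_of_le hL with hL0 | hLpos
  · have heq : ∀ r s, h s = h r + ⟪gh r, s - r⟫_ℝ := by
      intro r s
      have h1 := hfoc r s
      have h2 := hdesc r s
      rw [← hL0] at h2
      simp only [zero_div, zero_mul, add_zero] at h2
      linarith
    have e1 := heq p (p + d)
    have e2 := heq q (p + d)
    have e3 := heq q p
    rw [add_sub_cancel_left] at e1
    have e4 : (p + d) - q = (p - q) + d := by abel
    rw [e4, inner_add_right] at e2
    have e5 : ⟪gh p, d⟫_ℝ = ⟪gh q, d⟫_ℝ := by linarith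
    have e6 : ‖d‖ ^ 2 = 0 := by linarith
    rw [e6, ← hL0]
    simp
  · obtain ⟨c, hc⟩ : ∃ c : ℝ, c = 1 / L := ⟨_, rfl⟩
    obtain ⟨z, hz⟩ : ∃ z, z = p - c • d := ⟨_, rfl⟩
    have hz_p : z - p = -(c • d) := by rw [hz]; abel
    have hzp_norm : ‖z - p‖ ^ 2 = c ^ 2 * ‖d‖ ^ 2 := by
      rw [hz_p, norm_neg, norm_smul, Real.norm_eq_abs, mul_pow, sq_abs]
    have hzp_inner : ⟪gh p, z - p⟫_ℝ = -(c * ⟪gh p, d⟫_ℝ) := by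
      rw [hz_p, inner_neg_right, real_inner_smul_right]
    have hz_q : z - q = (p - q) - c • d := by rw [hz]; abel
    have hzq_inner : ⟪gh q, z - q⟫_ℝ = ⟪gh q, p - q⟫_ℝ - c * ⟪gh q, d⟫_ℝ := by
      rw [hz_q, inner_sub_right, real_inner_smul_right]
    have hqp : ⟪gh p, q - p⟫_ℝ = -⟪gh p, p - q⟫_ℝ := by
      rw [show q - p = -(p - q) by abel, inner_neg_right]
    have h1 := hfoc q z
    have h2 := hdesc p z
    have h3 := hfoc p q
    rw [hzq_inner] at h1
    rw [hzp_inner, hzp_norm] at h2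
    rw [hqp] at h3
    have hct : c * ⟪gh p, d⟫_ℝ = c * ⟪gh q, d⟫_ℝ + c * ‖d‖ ^ 2 := by rw [htd]; ring
    have hsum : c * ‖d‖ ^ 2 - L / 2 * (c ^ 2 * ‖d‖ ^ 2)
        ≤ ⟪gh p, p - q⟫_ℝ - ⟪gh q, p - q⟫_ℝ := by linarith
    have hdpq : ⟪d, p - q⟫_ℝ = ⟪gh p, p - q⟫_ℝ - ⟪gh q, p - q⟫_ℝ := by
      rw [hd, inner_sub_left]
    have hmul := mul_le_mul_of_nonneg_left hsum
      (by positivity : (0:ℝ) ≤ 2 * L)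
    have hred : 2 * L * (c * ‖d‖ ^ 2 - L / 2 * (c ^ 2 * ‖d‖ ^ 2)) = ‖d‖ ^ 2 := by
      have hLne : L ≠ 0 := ne_of_gt hLpos
      rw [hc]; field_simp; ring
    rw [hred] at hmul
    rw [hdpq]
    linarith

/-- Algebraic contraction step. -/
lemma pgd_step (α lam : ℝ) (hα : 0 < α) (hlamα : lam ≤ α) (u dd : E)
    (hkk : ‖dd‖ ^ 2 ≤ 2 * (α - lam) * ⟪dd, u⟫_ℝ) :
    ‖(1 - lam/α) • u - (1/α) • dd‖ ≤ (1 - lam/α) * ‖u‖ := by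
  have hα' : α ≠ 0 := ne_of_gt hα
  have hnormsq : ‖(1 - lam/α) • u - (1/α) • dd‖ ^ 2
      = (1 - lam/α) ^ 2 * ‖u‖ ^ 2 - 2 * ((1 - lam/α) * (1/α)) * ⟪u, dd⟫_ℝ
        + (1/α) ^ 2 * ‖dd‖ ^ 2 := by
    rw [norm_sub_sq_real, norm_smul, norm_smul, real_inner_smul_left, real_inner_smul_right,
      Real.norm_eq_abs, Real.norm_eq_abs, mul_pow, mul_pow, sq_abs, sq_abs]
    ring
  have hcomm : ⟪u, dd⟫_ℝ = ⟪dd, u⟫_ℝ := real_inner_comm dd u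
  have hρ : 0 ≤ 1 - lam/α := by
    rw [sub_nonneg]
    exact (div_le_one hα).mpr hlamα
  have h6 : 2 * ((1 - lam/α) * (1/α)) = (1/α) ^ 2 * (2 * (α - lam)) := by
    have h0 : (1:ℝ) - lam/α = (α - lam)/α := by rw [sub_div, div_self hα']
    rw [h0]; ring
  have hsq : ‖(1 - lam/α) • u - (1/α) • dd‖ ^ 2 ≤ ((1 - lam/α) * ‖u‖) ^ 2 := by
    rw [hnormsq, hcomm]
    have h5 : (1/α) ^ 2 * ‖dd‖ ^ 2 ≤ (1/α) ^ 2 * (2 * (α - lam) * ⟪dd, u⟫_ℝ) :=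
      mul_le_mul_of_nonneg_left hkk (by positivity)
    have h7 : 2 * ((1 - lam/α) * (1/α)) * ⟪dd, u⟫_ℝ
        = (1/α) ^ 2 * (2 * (α - lam) * ⟪dd, u⟫_ℝ) := by rw [h6, mul_assoc]
    rw [h7]
    nlinarith [h5]
  calc ‖(1 - lam/α) • u - (1/α) • dd‖
      = Real.sqrt (‖(1 - lam/α) • u - (1/α) • dd‖ ^ 2) :=
        (Real.sqrt_sq (norm_nonneg _)).symm
    _ ≤ Real.sqrt (((1 - lam/α) * ‖u‖) ^ 2) := Real.sqrt_le_sqrt hsq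
    _ = (1 - lam/α) * ‖u‖ := Real.sqrt_sq (mul_nonneg hρ (norm_nonneg u))

/-- Contraction of the exact gradient step for strongly convex smooth functions. -/
lemma pgd_contract (f : E → ℝ) (g : E → E) (α lam : ℝ) (hα : 0 < α)
    (hlamα : lam ≤ α) (hg : ∀ z, HasGradientAt f (g z) z)
    (hLip : ∀ p q, ‖g p - g q‖ ≤ α * ‖p - q‖) (hsc : StrongConvexOn Set.univ lam f)
    (a b : E) : ‖(a - b) - (1/α) • (g a - g b)‖ ≤ (1 - lam/α) * ‖a - b‖ := by
  have hgrad : ∀ z, HasGradientAt (fun w => f w - lam / 2 * ‖w‖ ^ 2) (g z - lam • z) z :=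
    fun z => pgd_grad_sub (hg z) (pgd_sq_grad lam z)
  have hconvh : ConvexOn ℝ Set.univ (fun w => f w - lam / 2 * ‖w‖ ^ 2) :=
    strongConvexOn_iff_convex.mp hsc
  have hfoc := pgd_convex_foc (fun w => f w - lam / 2 * ‖w‖ ^ 2)
    (fun z => g z - lam • z) hgrad hconvh
  have hmono_h : ∀ p q, ⟪(g p - lam • p) - (g q - lam • q), p - q⟫_ℝ
      ≤ (α - lam) * ‖p - q‖ ^ 2 := by
    intro p q
    have hd1 : (g p - lam • p) - (g q - lam • q) = (g p - g q) - lam • (p - q) := by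
      rw [smul_sub]; abel
    rw [hd1, inner_sub_left, real_inner_smul_left, real_inner_self_eq_norm_sq]
    nlinarith [real_inner_le_norm (g p - g q) (p - q),
      mul_le_mul_of_nonneg_right (hLip p q) (norm_nonneg (p - q)), norm_nonneg (p - q)]
  have hdesc := pgd_descent (fun w => f w - lam / 2 * ‖w‖ ^ 2)
    (fun z => g z - lam • z) (α - lam) hgrad hmono_h
  have hkey := pgd_coco (fun w => f w - lam / 2 * ‖w‖ ^ 2) (fun z => g z - lam • z)
    (α - lam) hfoc hdesc (sub_nonneg.mpr hlamα)
  obtain ⟨dd, hdd⟩ : ∃ dd, dd = (g a - lam • a) - (g b - lam • b) := ⟨_, rfl⟩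
  have hkk := hkey a b
  rw [← hdd] at hkk
  have hgab : g a - g b = dd + lam • (a - b) := by rw [hdd, smul_sub]; abel
  have hv : (a - b) - (1/α) • (g a - g b) = (1 - lam/α) • (a - b) - (1/α) • dd := by
    rw [hgab, smul_add, sub_smul, one_smul, smul_smul,
      (show (1/α) * lam = lam / α by ring)]
    abel
  rw [hv]
  exact pgd_step α lam hα hlamα (a - b) dd hkk


/-- Linear convergence of inexact projected gradient descent for strongly convex smooth
objectives (abstract form of Theorem 3.6).  `P` is the Euclidean projection onto the
nonempty closed convex set `C` (characterized by `P z ∈ C` minimizing the distance to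
`z` over `C`), `f` has an `α`-Lipschitz gradient `g` and is `λ`-strongly convex with
`0 < λ ≤ α`, `xstar` minimizes `f` over `C`, and the iterates satisfy
`x^{m+1} = P(x^m − (1/α)(g(x^m) + e_m))` with `‖e_m‖ ≤ E`.  Then
`‖x^m − x*‖ ≤ (1 − λ/α)^m ‖x^0 − x*‖ + E/λ` for all `m ≥ 1`. -/
theorem stmt_13 {n : ℕ} (C : Set (EuclideanSpace ℝ (Fin n)))
    (hCne : C.Nonempty) (hCclosed : IsClosed C) (hCconv : Convex ℝ C)
    (f : EuclideanSpace ℝ (Fin n) → ℝ) (α lam : ℝ) (hα : 0 < α)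
    (hlam0 : 0 < lam) (hlamα : lam ≤ α)
    (g : EuclideanSpace ℝ (Fin n) → EuclideanSpace ℝ (Fin n))
    (hg : ∀ x, HasGradientAt f (g x) x)
    (hLip : ∀ x y, ‖g x - g y‖ ≤ α * ‖x - y‖)
    (hsc : StrongConvexOn Set.univ lam f)
    (xstar : EuclideanSpace ℝ (Fin n)) (hxstarC : xstar ∈ C)
    (hxstar : ∀ y ∈ C, f xstar ≤ f y)
    (P : EuclideanSpace ℝ (Fin n) → EuclideanSpace ℝ (Fin n))
    (hP : ∀ z, P z ∈ C ∧ ∀ y ∈ C, ‖P z - z‖ ≤ ‖y - z‖)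
    (E : ℝ) (hE : 0 ≤ E)
    (e : ℕ → EuclideanSpace ℝ (Fin n)) (he : ∀ m, ‖e m‖ ≤ E)
    (x : ℕ → EuclideanSpace ℝ (Fin n)) (hx0 : x 0 ∈ C)
    (hupd : ∀ m, x (m + 1) = P (x m - (1 / α) • (g (x m) + e m))) :
    ∀ m : ℕ, 1 ≤ m →
      ‖x m - xstar‖ ≤ (1 - lam / α) ^ m * ‖x 0 - xstar‖ + E / lam := by
  have hα' : α ≠ 0 := ne_of_gt hα
  have hlam' : lam ≠ 0 := ne_of_gt hlam0
  -- variational inequality for the projection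
  have hVI : ∀ z, ∀ y ∈ C, ⟪z - P z, y - P z⟫_ℝ ≤ 0 := by
    intro z y hy
    by_contra hpos
    push_neg at hpos
    obtain ⟨v, hv⟩ : ∃ v, v = y - P z := ⟨_, rfl⟩
    rw [← hv] at hpos
    have hv0 : v ≠ 0 := by
      intro h0; rw [h0, inner_zero_right] at hpos; exact lt_irrefl 0 hpos
    have hq : (0:ℝ) < ‖v‖ ^ 2 := pow_pos (norm_pos_iff.mpr hv0) 2
    obtain ⟨t, htdef⟩ : ∃ t : ℝ, t = min 1 (⟪z - P z, v⟫_ℝ / ‖v‖ ^ 2) := ⟨_, rfl⟩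
    have ht0 : 0 < t := by rw [htdef]; exact lt_min one_pos (div_pos hpos hq)
    have ht1 : t ≤ 1 := by rw [htdef]; exact min_le_left _ _
    have hmem : P z + t • v ∈ C := by
      have h2 := hCconv (hP z).1 hy (by linarith : (0:ℝ) ≤ 1 - t) ht0.le (by ring)
      have h3 : (1 - t) • P z + t • y = P z + t • v := by
        rw [hv, smul_sub, sub_smul, one_smul]; abel
      rwa [h3] at h2
    have h4 := (hP z).2 _ hmem
    have h6 : (P z + t • v) - z = (P z - z) + t • v := by abel
    rw [h6] at h4
    have h5 : ‖P z - z‖ ^ 2 ≤ ‖(P z - z) + t • v‖ ^ 2 :=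
      pow_le_pow_left₀ (norm_nonneg _) h4 2
    rw [norm_add_sq_real, real_inner_smul_right, norm_smul, Real.norm_eq_abs, mul_pow,
      sq_abs] at h5
    have h7 : ⟪P z - z, v⟫_ℝ = -⟪z - P z, v⟫_ℝ := by
      rw [show P z - z = -(z - P z) by abel, inner_neg_left]
    rw [h7] at h5
    have h8 : t * ‖v‖ ^ 2 ≤ ⟪z - P z, v⟫_ℝ := by
      have h9 : t ≤ ⟪z - P z, v⟫_ℝ / ‖v‖ ^ 2 := by rw [htdef]; exact min_le_right _ _
      have h10 := mul_le_mul_of_nonneg_right h9 hq.le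
      rwa [div_mul_cancel₀ _ (ne_of_gt hq)] at h10
    nlinarith [mul_pos ht0 hpos, mul_le_mul_of_nonneg_left h8 ht0.le]
  -- nonexpansiveness of the projection
  have hPnon : ∀ p q, ‖P p - P q‖ ≤ ‖p - q‖ := by
    intro p q
    have e1 : ⟪p - P p, P q - P p⟫_ℝ ≤ 0 := hVI p (P q) (hP q).1
    have e2 : ⟪q - P q, P p - P q⟫_ℝ ≤ 0 := hVI q (P p) (hP p).1
    have hkey : ‖P p - P q‖ ^ 2 ≤ ⟪p - q, P p - P q⟫_ℝ := by
      have hsplit : p - q = (p - P p) + (P p - P q) + (P q - q) := by abel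
      rw [hsplit, inner_add_left, inner_add_left, real_inner_self_eq_norm_sq]
      have e1' : ⟪p - P p, P p - P q⟫_ℝ = -⟪p - P p, P q - P p⟫_ℝ := by
        rw [show P p - P q = -(P q - P p) by abel, inner_neg_right]
      have e2' : ⟪P q - q, P p - P q⟫_ℝ = -⟪q - P q, P p - P q⟫_ℝ := by
        rw [show P q - q = -(q - P q) by abel, inner_neg_left]
      rw [e1', e2']
      linarith
    have hcs := real_inner_le_norm (p - q) (P p - P q)
    rcases eq_or_lt_of_le (norm_nonneg (P p - P q)) with h0 | hpos
    · rw [← h0]; exact norm_nonneg _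
    · nlinarith [hkey.trans hcs]
  -- descent lemma for f
  have hmonoF : ∀ p q, ⟪g p - g q, p - q⟫_ℝ ≤ α * ‖p - q‖ ^ 2 := by
    intro p q
    nlinarith [real_inner_le_norm (g p - g q) (p - q),
      mul_le_mul_of_nonneg_right (hLip p q) (norm_nonneg (p - q)), norm_nonneg (p - q)]
  have hdescf := pgd_descent f g α hg hmonoF
  -- first-order optimality of xstar
  have hopt : ∀ y ∈ C, 0 ≤ ⟪g xstar, y - xstar⟫_ℝ := by
    intro y hy
    by_contra hneg
    push_neg at hneg
    obtain ⟨u, hu⟩ : ∃ u, u = y - xstar := ⟨_, rfl⟩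
    rw [← hu] at hneg
    have hu0 : u ≠ 0 := by
      intro h0
      rw [h0, inner_zero_right] at hneg
      exact absurd hneg (lt_irrefl 0)
    have hupos : (0:ℝ) < ‖u‖ ^ 2 := pow_pos (norm_pos_iff.mpr hu0) 2
    obtain ⟨t, ht⟩ : ∃ t : ℝ, t = min 1 (-⟪g xstar, u⟫_ℝ / (α * ‖u‖ ^ 2)) := ⟨_, rfl⟩
    have ht0 : 0 < t := by
      rw [ht]
      exact lt_min one_pos (div_pos (neg_pos.mpr hneg) (by positivity))
    have ht1 : t ≤ 1 := by rw [ht]; exact min_le_left _ _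
    have hmem : xstar + t • u ∈ C := by
      have h2 := hCconv hxstarC hy (by linarith : (0:ℝ) ≤ 1 - t) ht0.le (by ring)
      have h3 : (1 - t) • xstar + t • y = xstar + t • u := by
        rw [hu, smul_sub, sub_smul, one_smul]; abel
      rwa [h3] at h2
    have hd := hdescf xstar (xstar + t • u)
    have h1 : (xstar + t • u) - xstar = t • u := by abel
    rw [h1, real_inner_smul_right,
      (show ‖t • u‖ ^ 2 = t ^ 2 * ‖u‖ ^ 2 by
        rw [norm_smul, Real.norm_eq_abs, mul_pow, sq_abs])] at hd
    have hmin := hxstar _ hmem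
    have h3 : 0 ≤ t * ⟪g xstar, u⟫_ℝ + α / 2 * (t ^ 2 * ‖u‖ ^ 2) := by linarith
    have h4 : α / 2 * (t * ‖u‖ ^ 2) ≤ -⟪g xstar, u⟫_ℝ / 2 := by
      have h5 : t ≤ -⟪g xstar, u⟫_ℝ / (α * ‖u‖ ^ 2) := by rw [ht]; exact min_le_right _ _
      have h6 := mul_le_mul_of_nonneg_right h5 (le_of_lt hupos)
      have h7 : -⟪g xstar, u⟫_ℝ / (α * ‖u‖ ^ 2) * ‖u‖ ^ 2 = -⟪g xstar, u⟫_ℝ / α := by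
        field_simp
      rw [h7] at h6
      have h8 := mul_le_mul_of_nonneg_left h6 (by positivity : (0:ℝ) ≤ α / 2)
      calc α / 2 * (t * ‖u‖ ^ 2) = α / 2 * (t * ‖u‖ ^ 2) := rfl
        _ ≤ α / 2 * (-⟪g xstar, u⟫_ℝ / α) := h8
        _ = -⟪g xstar, u⟫_ℝ / 2 := by field_simp
    nlinarith [mul_le_mul_of_nonneg_left h4 ht0.le, mul_pos ht0 (neg_pos.mpr hneg)]
  -- xstar is a fixed point of the exact projected gradient step
  obtain ⟨zs, hzs⟩ : ∃ zs, zs = xstar - (1/α) • g xstar := ⟨_, rfl⟩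
  have hfix : P zs = xstar := by
    have h1 := hVI zs xstar hxstarC
    have h2 : 0 ≤ ⟪g xstar, P zs - xstar⟫_ℝ := hopt _ (hP zs).1
    have h3 : ⟪xstar - zs, xstar - P zs⟫_ℝ ≤ 0 := by
      have h4 : xstar - zs = (1/α) • g xstar := by rw [hzs]; abel
      rw [h4, real_inner_smul_left,
        (show xstar - P zs = -(P zs - xstar) by abel), inner_neg_right]
      have := mul_nonneg (by positivity : (0:ℝ) ≤ 1/α) h2
      linarith
    have hexp : ‖xstar - P zs‖ ^ 2
        = ⟪xstar - zs, xstar - P zs⟫_ℝ + ⟪zs - P zs, xstar - P zs⟫_ℝ := by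
      rw [← inner_add_left, (show (xstar - zs) + (zs - P zs) = xstar - P zs by abel),
        real_inner_self_eq_norm_sq]
    have h5 : ‖xstar - P zs‖ ^ 2 ≤ 0 := by rw [hexp]; linarith
    have h6 : ‖xstar - P zs‖ = 0 := by nlinarith [norm_nonneg (xstar - P zs)]
    have h7 : xstar - P zs = 0 := norm_eq_zero.mp h6
    have := sub_eq_zero.mp h7
    exact this.symm
  -- contraction of the gradient step
  have hcontract := pgd_contract f g α lam hα hlamα hg hLip hsc
  -- one-step recursion
  have hrec : ∀ m, ‖x (m+1) - xstar‖ ≤ (1 - lam/α) * ‖x m - xstar‖ + E/α := by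
    intro m
    rw [hupd m]
    have hnon := hPnon (x m - (1 / α) • (g (x m) + e m)) zs
    rw [hfix] at hnon
    refine hnon.trans ?_
    have hw : (x m - (1 / α) • (g (x m) + e m)) - zs
        = ((x m - xstar) - (1/α) • (g (x m) - g xstar)) + (-(1/α)) • e m := by
      rw [hzs, smul_add, smul_sub, neg_smul]
      abel
    rw [hw]
    refine (norm_add_le _ _).trans ?_
    have hc := hcontract (x m) xstar
    have he' : ‖(-(1/α)) • e m‖ ≤ E/α := by
      rw [norm_smul, Real.norm_eq_abs, abs_neg, abs_of_pos (by positivity : (0:ℝ) < 1/α)]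
      calc 1/α * ‖e m‖ ≤ 1/α * E := by
            exact mul_le_mul_of_nonneg_left (he m) (by positivity)
        _ = E/α := by ring
    linarith
  -- induction
  have hρ0 : 0 ≤ 1 - lam/α := by rw [sub_nonneg]; exact (div_le_one hα).mpr hlamα
  have hind : ∀ m, ‖x m - xstar‖ ≤ (1 - lam/α) ^ m * ‖x 0 - xstar‖ + E/lam := by
    intro m
    induction m with
    | zero =>
      simp only [pow_zero, one_mul]
      have : 0 ≤ E/lam := by positivity
      linarith
    | succ m ih =>
      have h1 := hrec m
      have h2 := mul_le_mul_of_nonneg_left ih hρ0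
      have h3 : (1 - lam/α) * (E/lam) + E/α = E/lam := by
        field_simp
        ring
      calc ‖x (m+1) - xstar‖ ≤ (1 - lam/α) * ‖x m - xstar‖ + E/α := h1
        _ ≤ (1 - lam/α) * ((1 - lam/α) ^ m * ‖x 0 - xstar‖ + E/lam) + E/α := by linarith
        _ = (1 - lam/α) ^ (m+1) * ‖x 0 - xstar‖ + ((1 - lam/α) * (E/lam) + E/α) := by ring
        _ = (1 - lam/α) ^ (m+1) * ‖x 0 - xstar‖ + E/lam := by rw [h3]
  intro m _
  exact hind m
end

section
/- Sublinear convergence of inexact projected gradient for convex smooth objectives (Theorem G.4, degenerate case): let C ⊆ ℝ^n be a nonempty closed convex set, f : ℝ^n → ℝ convex and differentiable with ∇f α-Lipschitz (α > 0), and let x* be a minimizer of f over C. Suppose a sequence (x^m) in C satisfies x^{m+1} = proj_C( x^m − (1/α)(∇f(x^m) + e_{m+1}) ). Then for every m ≥ 1, f( (1/m) Σ_{i=1}^m x^i ) − f(x*) ≤ (α/(2m)) · ( ‖x^0 − x*‖₂ + (2/α) Σ_{i=1}^m ‖e_i‖₂ )². -/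
open InnerProductSpace Set Finset

variable {E : Type*} [NormedAddCommGroup E] [InnerProductSpace ℝ E] [CompleteSpace E]

lemma line_hasDerivAt {f : E → ℝ} {g : E → E} (hg : ∀ x, HasGradientAt f (g x) x)
    (x y : E) (t : ℝ) :
    HasDerivAt (fun s : ℝ => f (x + s • (y - x))) ⟪g (x + t • (y - x)), y - x⟫_ℝ t := by
  have hline : HasDerivAt (fun s : ℝ => x + s • (y - x)) (y - x) t := by
    simpa using ((hasDerivAt_id t).smul_const (y - x)).const_add x
  have h := (hg (x + t • (y - x))).hasFDerivAt.comp_hasDerivAt t hline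
  simpa [InnerProductSpace.toDual_apply_apply, Function.comp_def] using h

lemma convex_grad_ineq {f : E → ℝ} (hconv : ConvexOn ℝ Set.univ f) {g : E → E}
    (hg : ∀ x, HasGradientAt f (g x) x) (x y : E) :
    f x + ⟪g x, y - x⟫_ℝ ≤ f y := by
  have hd : HasDerivAt (fun s : ℝ => f (x + s • (y - x))) ⟪g x, y - x⟫_ℝ 0 := by
    simpa using line_hasDerivAt hg x y 0
  have hsl := hasDerivAt_iff_tendsto_slope.1 hd
  have hsl' : Filter.Tendsto (slope (fun s : ℝ => f (x + s • (y - x))) 0) (nhdsWithin 0 (Set.Ioi 0))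
      (nhds ⟪g x, y - x⟫_ℝ) :=
    hsl.mono_left (nhdsWithin_mono 0 (fun t ht => ne_of_gt ht))
  have hev : ∀ᶠ t in nhdsWithin (0:ℝ) (Set.Ioi 0),
      slope (fun s : ℝ => f (x + s • (y - x))) 0 t ≤ f y - f x := by
    filter_upwards [Ioc_mem_nhdsGT zero_lt_one] with t ht
    have hx' : x + t • (y - x) = (1 - t) • x + t • y := by
      rw [smul_sub, sub_smul, one_smul]; abel
    have hc := hconv.2 (Set.mem_univ x) (Set.mem_univ y)
      (by linarith [ht.2] : (0:ℝ) ≤ 1 - t) (le_of_lt ht.1) (by ring)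
    rw [smul_eq_mul, smul_eq_mul] at hc
    rw [slope_def_field]
    simp only [zero_smul, add_zero, sub_zero]
    rw [div_le_iff₀ ht.1, hx']
    calc f ((1 - t) • x + t • y) - f x ≤ (1 - t) * f x + t * f y - f x := by linarith
      _ = (f y - f x) * t := by ring
  have := le_of_tendsto hsl' hev
  linarith

lemma descent_lemma {f : E → ℝ} {g : E → E} {α : ℝ}
    (hg : ∀ x, HasGradientAt f (g x) x)
    (hLip : ∀ a b, ‖g a - g b‖ ≤ α * ‖a - b‖) (hα : 0 < α) (x y : E) :
    f y ≤ f x + ⟪g x, y - x⟫_ℝ + α / 2 * ‖y - x‖ ^ 2 := by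
  have hcontg : Continuous g := by
    have : LipschitzWith (Real.toNNReal α) g := by
      apply LipschitzWith.of_dist_le_mul
      intro a b
      rw [dist_eq_norm, dist_eq_norm, Real.coe_toNNReal α hα.le]
      exact hLip a b
    exact this.continuous
  set ψ : ℝ → ℝ := fun t => ⟪g (x + t • (y - x)), y - x⟫_ℝ with hψ
  have hcontψ : Continuous ψ := by
    apply Continuous.inner
    · exact hcontg.comp (by continuity)
    · exact continuous_const
  have hder : ∀ t ∈ Set.uIcc (0:ℝ) 1,
      HasDerivAt (fun s : ℝ => f (x + s • (y - x))) (ψ t) t :=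
    fun t _ => line_hasDerivAt hg x y t
  have hftc := intervalIntegral.integral_eq_sub_of_hasDerivAt hder
    (hcontψ.intervalIntegrable 0 1)
  have h0 : x + (0:ℝ) • (y - x) = x := by simp
  have h1 : x + (1:ℝ) • (y - x) = y := by simp
  rw [h0, h1] at hftc
  have hmono : ∫ t in (0:ℝ)..1, ψ t ≤ ∫ t in (0:ℝ)..1, (ψ 0 + α * ‖y - x‖ ^ 2 * t) := by
    apply intervalIntegral.integral_mono_on zero_le_one (hcontψ.intervalIntegrable 0 1)
    · exact (Continuous.intervalIntegrable (by continuity) 0 1)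
    · intro t ht
      have hdiff : ψ t - ψ 0 = ⟪g (x + t • (y - x)) - g x, y - x⟫_ℝ := by
        simp [hψ, inner_sub_left]
      have hb : ⟪g (x + t • (y - x)) - g x, y - x⟫_ℝ ≤ α * ‖y - x‖ ^ 2 * t := by
        calc ⟪g (x + t • (y - x)) - g x, y - x⟫_ℝ
            ≤ ‖g (x + t • (y - x)) - g x‖ * ‖y - x‖ := real_inner_le_norm _ _
          _ ≤ (α * ‖(x + t • (y - x)) - x‖) * ‖y - x‖ := by
              apply mul_le_mul_of_nonneg_right _ (norm_nonneg _)
              exact hLip _ _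
          _ = α * ‖y - x‖ ^ 2 * t := by
              rw [add_sub_cancel_left, norm_smul, Real.norm_eq_abs, abs_of_nonneg ht.1]
              ring
      linarith [hdiff ▸ hb]
  have hval : ∫ t in (0:ℝ)..1, (ψ 0 + α * ‖y - x‖ ^ 2 * t) = ψ 0 + α / 2 * ‖y - x‖ ^ 2 := by
    rw [intervalIntegral.integral_add intervalIntegrable_const
      ((by continuity : Continuous fun t : ℝ => α * ‖y - x‖ ^ 2 * t).intervalIntegrable 0 1),
      intervalIntegral.integral_const, intervalIntegral.integral_const_mul, integral_id]
    simp
    ring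
  have hψ0 : ψ 0 = ⟪g x, y - x⟫_ℝ := by simp [hψ]
  rw [hftc] at hmono
  rw [hval, hψ0] at hmono
  linarith

lemma proj_vi {C : Set E} (hCconv : Convex ℝ C) {P : E → E}
    (hP : ∀ z, P z ∈ C ∧ ∀ y ∈ C, ‖P z - z‖ ≤ ‖y - z‖) (z : E) {y : E} (hy : y ∈ C) :
    ⟪z - P z, y - P z⟫_ℝ ≤ 0 := by
  haveI : Nonempty C := ⟨⟨y, hy⟩⟩
  have hinf : ‖z - P z‖ = ⨅ w : C, ‖z - (w:E)‖ := by
    apply le_antisymm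
    · apply le_ciInf
      intro w
      rw [norm_sub_rev z (P z), norm_sub_rev z (w:E)]
      exact (hP z).2 w w.2
    · exact ciInf_le (⟨0, by rintro a ⟨w, rfl⟩; exact norm_nonneg _⟩ :
        BddBelow (Set.range fun w : C => ‖z - (w:E)‖)) ⟨P z, (hP z).1⟩
  exact (norm_eq_iInf_iff_real_inner_le_zero hCconv (hP z).1).1 hinf y hy

/-- Sublinear convergence of inexact projected gradient descent for convex smooth
objectives (Theorem G.4, degenerate case).  `P` is the Euclidean projection onto the
nonempty closed convex set `C`, `f` is convex with an `α`-Lipschitz gradient `g`,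
`xstar` minimizes `f` over `C`, and the iterates satisfy
`x^{m+1} = P(x^m − (1/α)(g(x^m) + e_{m+1}))`.  Then for all `m ≥ 1`, the averaged
iterate satisfies
`f((1/m) Σ_{i=1}^m x^i) − f(x*) ≤ (α/(2m)) (‖x^0 − x*‖ + (2/α) Σ_{i=1}^m ‖e_i‖)²`. -/
theorem stmt_14 {n : ℕ} (C : Set (EuclideanSpace ℝ (Fin n)))
    (hCne : C.Nonempty) (hCclosed : IsClosed C) (hCconv : Convex ℝ C)
    (f : EuclideanSpace ℝ (Fin n) → ℝ) (α : ℝ) (hα : 0 < α)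
    (hconv : ConvexOn ℝ Set.univ f)
    (g : EuclideanSpace ℝ (Fin n) → EuclideanSpace ℝ (Fin n))
    (hg : ∀ x, HasGradientAt f (g x) x)
    (hLip : ∀ x y, ‖g x - g y‖ ≤ α * ‖x - y‖)
    (xstar : EuclideanSpace ℝ (Fin n)) (hxstarC : xstar ∈ C)
    (hxstar : ∀ y ∈ C, f xstar ≤ f y)
    (P : EuclideanSpace ℝ (Fin n) → EuclideanSpace ℝ (Fin n))
    (hP : ∀ z, P z ∈ C ∧ ∀ y ∈ C, ‖P z - z‖ ≤ ‖y - z‖)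
    (e : ℕ → EuclideanSpace ℝ (Fin n))
    (x : ℕ → EuclideanSpace ℝ (Fin n)) (hx0 : x 0 ∈ C)
    (hupd : ∀ m, x (m + 1) = P (x m - (1 / α) • (g (x m) + e (m + 1)))) :
    ∀ m : ℕ, 1 ≤ m →
      f ((m : ℝ)⁻¹ • ∑ i ∈ Finset.Icc 1 m, x i) - f xstar ≤
        α / (2 * m) *
          (‖x 0 - xstar‖ + (2 / α) * ∑ i ∈ Finset.Icc 1 m, ‖e i‖) ^ 2 := by
  have hxC : ∀ i, x i ∈ C := by
    intro i
    cases i with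
    | zero => exact hx0
    | succ k => rw [hupd k]; exact (hP _).1
  -- the key inner product identity
  have keyid : ∀ u v : EuclideanSpace ℝ (Fin n),
      ⟪u - v, v - xstar⟫_ℝ + 1 / 2 * ‖u - v‖ ^ 2 =
        1 / 2 * (‖u - xstar‖ ^ 2 - ‖v - xstar‖ ^ 2) := by
    intro u v
    have h : u - v = (u - xstar) - (v - xstar) := by abel
    rw [h, norm_sub_sq_real, inner_sub_left, real_inner_self_eq_norm_sq]
    ring
  -- per-step inequality
  have step : ∀ i : ℕ, f (x (i + 1)) - f xstar ≤
      α / 2 * (‖x i - xstar‖ ^ 2 - ‖x (i + 1) - xstar‖ ^ 2) +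
        ‖e (i + 1)‖ * ‖x (i + 1) - xstar‖ := by
    intro i
    set u := x i with hu
    set v := x (i + 1) with hv
    set w := e (i + 1) with hw
    set z := u - (1 / α) • (g u + w) with hz
    have hvP : v = P z := hupd i
    have hVI : ⟪z - v, xstar - v⟫_ℝ ≤ 0 := by
      have h := proj_vi hCconv hP z hxstarC
      rw [← hvP] at h; exact h
    have hzv : z - v = (u - v) - (1 / α) • (g u + w) := by rw [hz]; abel
    rw [hzv, inner_sub_left, real_inner_smul_left, inner_add_left] at hVI
    have h1' : α * ⟪u - v, xstar - v⟫_ℝ ≤ ⟪g u, xstar - v⟫_ℝ + ⟪w, xstar - v⟫_ℝ := by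
      have h2 : ⟪u - v, xstar - v⟫_ℝ ≤ (1 / α) * (⟪g u, xstar - v⟫_ℝ + ⟪w, xstar - v⟫_ℝ) := by
        linarith
      have h3 := mul_le_mul_of_nonneg_left h2 hα.le
      have h4 : α * ((1 / α) * (⟪g u, xstar - v⟫_ℝ + ⟪w, xstar - v⟫_ℝ)) =
          ⟪g u, xstar - v⟫_ℝ + ⟪w, xstar - v⟫_ℝ := by
        field_simp
      linarith
    have hdesc := descent_lemma hg hLip hα u v
    have hgrad := convex_grad_ineq hconv hg u xstar
    have hsplit : ⟪g u, v - u⟫_ℝ = ⟪g u, v - xstar⟫_ℝ + ⟪g u, xstar - u⟫_ℝ := by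
      rw [← inner_add_right]
      congr 1
      abel
    have hflip1 : ⟪g u, xstar - v⟫_ℝ = -⟪g u, v - xstar⟫_ℝ := by
      rw [← inner_neg_right, neg_sub]
    have hflip2 : ⟪u - v, xstar - v⟫_ℝ = -⟪u - v, v - xstar⟫_ℝ := by
      rw [← inner_neg_right, neg_sub]
    have hflip2' : α * ⟪u - v, xstar - v⟫_ℝ = -(α * ⟪u - v, v - xstar⟫_ℝ) := by
      rw [hflip2]; ring
    have hcs : ⟪w, xstar - v⟫_ℝ ≤ ‖w‖ * ‖v - xstar‖ := by
      calc ⟪w, xstar - v⟫_ℝ ≤ ‖w‖ * ‖xstar - v‖ := real_inner_le_norm _ _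
        _ = ‖w‖ * ‖v - xstar‖ := by rw [norm_sub_rev]
    have hid2 : α * ⟪u - v, v - xstar⟫_ℝ + α / 2 * ‖u - v‖ ^ 2 =
        α / 2 * (‖u - xstar‖ ^ 2 - ‖v - xstar‖ ^ 2) := by
      linear_combination α * keyid u v
    have hnorm : ‖v - u‖ = ‖u - v‖ := norm_sub_rev _ _
    rw [hnorm] at hdesc
    linarith
  -- distance growth bound
  have dsucc : ∀ i : ℕ, ‖x (i + 1) - xstar‖ ≤ ‖x i - xstar‖ + 2 / α * ‖e (i + 1)‖ := by
    intro i
    have hs := step i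
    have hfv := hxstar (x (i + 1)) (hxC (i + 1))
    set a := ‖x (i + 1) - xstar‖ with ha
    set b := ‖x i - xstar‖ with hb
    set c := ‖e (i + 1)‖ with hc
    have ha0 : 0 ≤ a := norm_nonneg _
    have hb0 : 0 ≤ b := norm_nonneg _
    have hc0 : 0 ≤ c := norm_nonneg _
    rcases le_or_gt a b with h | h
    · have : 0 ≤ 2 / α * c := by positivity
      linarith
    · have hapos : 0 < a := lt_of_le_of_lt hb0 h
      have hbb : α * b * b ≤ α * b * a := mul_le_mul_of_nonneg_left h.le (mul_nonneg hα.le hb0)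
      have hq : α * a * a ≤ (α * b + 2 * c) * a := by nlinarith [hbb, hs, hfv]
      have : α * a ≤ α * b + 2 * c := le_of_mul_le_mul_right hq hapos
      have hgoal : a - b ≤ 2 * c / α := by
        rw [le_div_iff₀ hα]
        linarith
      have : 2 / α * c = 2 * c / α := by ring
      linarith
  have dbound : ∀ i : ℕ, ‖x i - xstar‖ ≤
      ‖x 0 - xstar‖ + 2 / α * ∑ j ∈ Finset.Icc 1 i, ‖e j‖ := by
    intro i
    induction i with
    | zero => simp
    | succ k ih =>
      rw [Finset.sum_Icc_succ_top (Nat.le_add_left 1 k), mul_add]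
      have := dsucc k
      linarith
  -- telescoping sum
  have telescope : ∀ m : ℕ, ∑ i ∈ Finset.Icc 1 m, (f (x i) - f xstar) ≤
      α / 2 * (‖x 0 - xstar‖ ^ 2 - ‖x m - xstar‖ ^ 2) +
        ∑ i ∈ Finset.Icc 1 m, ‖e i‖ * ‖x i - xstar‖ := by
    intro m
    induction m with
    | zero => simp
    | succ k ih =>
      rw [Finset.sum_Icc_succ_top (Nat.le_add_left 1 k),
        Finset.sum_Icc_succ_top (Nat.le_add_left 1 k)]
      have := step k
      linarith
  intro m hm
  have hm0 : (0:ℝ) < m := by exact_mod_cast Nat.lt_of_lt_of_le Nat.zero_lt_one hm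
  set d0 := ‖x 0 - xstar‖ with hd0def
  set S := ∑ i ∈ Finset.Icc 1 m, ‖e i‖ with hSdef
  have hS0 : 0 ≤ S := Finset.sum_nonneg fun i _ => norm_nonneg _
  have hd0 : 0 ≤ d0 := norm_nonneg _
  set X := d0 + 2 / α * S with hXdef
  clear_value X
  have hsum2 : ∑ i ∈ Finset.Icc 1 m, ‖e i‖ * ‖x i - xstar‖ ≤ S * X := by
    calc ∑ i ∈ Finset.Icc 1 m, ‖e i‖ * ‖x i - xstar‖
        ≤ ∑ i ∈ Finset.Icc 1 m, ‖e i‖ * X := by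
          apply Finset.sum_le_sum
          intro i hi
          apply mul_le_mul_of_nonneg_left _ (norm_nonneg _)
          have h1 := dbound i
          have h2 : ∑ j ∈ Finset.Icc 1 i, ‖e j‖ ≤ S := by
            apply Finset.sum_le_sum_of_subset_of_nonneg
            · exact Finset.Icc_subset_Icc_right (Finset.mem_Icc.1 hi).2
            · intro j _ _; exact norm_nonneg _
          have h3 : 2 / α * ∑ j ∈ Finset.Icc 1 i, ‖e j‖ ≤ 2 / α * S :=
            mul_le_mul_of_nonneg_left h2 (by positivity)
          rw [hXdef]
          linarith
      _ = S * X := by rw [← Finset.sum_mul]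
  have htotal : ∑ i ∈ Finset.Icc 1 m, (f (x i) - f xstar) ≤ α / 2 * d0 ^ 2 + S * X := by
    have h1 := telescope m
    have h2 : 0 ≤ α / 2 * ‖x m - xstar‖ ^ 2 := by positivity
    nlinarith [h1, h2, hsum2]
  -- Jensen
  have hcard : (Finset.Icc 1 m).card = m := by
    rw [Nat.card_Icc]
    omega
  have hmne : (m : ℝ) ≠ 0 := ne_of_gt hm0
  have hw1 : ∑ _i ∈ Finset.Icc 1 m, (m : ℝ)⁻¹ = 1 := by
    rw [Finset.sum_const, hcard, nsmul_eq_mul, mul_inv_cancel₀ hmne]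
  have hj := hconv.map_sum_le (w := fun _ => (m : ℝ)⁻¹) (p := x)
    (fun i _ => by positivity) hw1 (fun i _ => Set.mem_univ _)
  rw [← Finset.smul_sum] at hj
  simp only [smul_eq_mul] at hj
  have hsum3 : ∑ i ∈ Finset.Icc 1 m, (m : ℝ)⁻¹ * f (x i) =
      (m : ℝ)⁻¹ * ∑ i ∈ Finset.Icc 1 m, (f (x i) - f xstar) + f xstar := by
    have e1 : (m : ℝ)⁻¹ * ∑ i ∈ Finset.Icc 1 m, (f (x i) - f xstar) =
        ∑ i ∈ Finset.Icc 1 m, ((m : ℝ)⁻¹ * f (x i)) -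
          ∑ i ∈ Finset.Icc 1 m, ((m : ℝ)⁻¹ * f xstar) := by
      rw [Finset.mul_sum, ← Finset.sum_sub_distrib]
      apply Finset.sum_congr rfl
      intro i _
      ring
    have e2 : ∑ _i ∈ Finset.Icc 1 m, ((m : ℝ)⁻¹ * f xstar) = f xstar := by
      rw [Finset.sum_const, hcard, nsmul_eq_mul]
      field_simp
    rw [e1, e2]
    ring
  have hfinal : (m : ℝ)⁻¹ * (α / 2 * d0 ^ 2 + S * X) ≤ α / (2 * m) * X ^ 2 := by
    have hexp : α / 2 * X ^ 2 = α / 2 * d0 ^ 2 + 2 * d0 * S + 2 / α * S ^ 2 := by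
      rw [hXdef]; field_simp; ring
    have hSX : S * X = S * d0 + 2 / α * S ^ 2 := by rw [hXdef]; ring
    have hd0S : 0 ≤ d0 * S := mul_nonneg hd0 hS0
    have hcore : α / 2 * d0 ^ 2 + S * X ≤ α / 2 * X ^ 2 := by
      rw [hexp, hSX]; linarith
    have h2m : α / (2 * m) * X ^ 2 = (m : ℝ)⁻¹ * (α / 2 * X ^ 2) := by
      rw [mul_comm (2:ℝ) (m:ℝ), ← div_div, div_eq_mul_inv α (m:ℝ)]
      ring
    rw [h2m]
    exact mul_le_mul_of_nonneg_left hcore (by positivity)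
  have hmul := mul_le_mul_of_nonneg_left htotal (by positivity : (0:ℝ) ≤ (m : ℝ)⁻¹)
  calc f ((m : ℝ)⁻¹ • ∑ i ∈ Finset.Icc 1 m, x i) - f xstar
      ≤ (∑ i ∈ Finset.Icc 1 m, (m : ℝ)⁻¹ * f (x i)) - f xstar := by linarith [hj]
    _ = (m : ℝ)⁻¹ * ∑ i ∈ Finset.Icc 1 m, (f (x i) - f xstar) := by rw [hsum3]; ring
    _ ≤ (m : ℝ)⁻¹ * (α / 2 * d0 ^ 2 + S * X) := hmul
    _ ≤ α / (2 * m) * X ^ 2 := hfinal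
end
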